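/- arXiv:2207.07438 — 6 statements merged into one kernel-verified Lean document; each statement's English description precedes it below -/
import Mathlib

section
/- Let M be a maximal matching in a graph G with |M| ≤ (1/2 + c)·μ(G) for some real c. Then there exist at least (1/2 − 3c)·μ(G) vertex-disjoint augmenting paths of length three with respect to M. -/
variable {V : Type*}

/-- A matching of `G`: a finset of edges of `G` that are pairwise vertex-disjoint. -/
def IsMatching (G : SimpleGraph V) (M : Finset (Sym2 V)) : Prop :=
  (∀ e ∈ M, e ∈ G.edgeSet) ∧
    ∀ e ∈ M, ∀ f ∈ M, e ≠ f → ∀ v : V, v ∈ e → v ∉ f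

/-- A vertex is matched by `M` if it belongs to some edge of `M`. -/
def Matched (M : Finset (Sym2 V)) (v : V) : Prop := ∃ e ∈ M, v ∈ e

/-- A maximal matching: every edge of `G` has a matched endpoint. -/
def IsMaximalMatching (G : SimpleGraph V) (M : Finset (Sym2 V)) : Prop :=
  IsMatching G M ∧ ∀ e ∈ G.edgeSet, ∃ v, v ∈ e ∧ Matched M v

/-- μ(G): the maximum matching size of `G`. -/
noncomputable def matchNum (G : SimpleGraph V) : ℕ :=
  sSup {n | ∃ M : Finset (Sym2 V), IsMatching G M ∧ M.card = n}

/-- The subgraph of `G` induced by the vertex set `S` (on the same vertex type). -/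
def restrictVerts (G : SimpleGraph V) (S : Set V) : SimpleGraph V where
  Adj u v := G.Adj u v ∧ u ∈ S ∧ v ∈ S
  symm := ⟨fun u v h => ⟨h.1.symm, h.2.2, h.2.1⟩⟩
  loopless := ⟨fun u h => G.loopless.irrefl u h.1⟩

/-- `M` is an ε-approximately maximal matching of `G`: it is maximal in a subgraph of `G`
obtained by deleting at most `ε * μ(G)` vertices. -/
def IsAMM (G : SimpleGraph V) (ε : ℝ) (M : Finset (Sym2 V)) : Prop :=
  IsMatching G M ∧ ∃ D : Finset V, (D.card : ℝ) ≤ ε * matchNum G ∧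
    IsMaximalMatching (restrictVerts G ((↑D : Set V)ᶜ)) M

/-- The four vertices of a (candidate) length-three augmenting path `u' - u - v - v'`,
encoded as the tuple `(u', u, v, v')`. -/
def pathVerts [DecidableEq V] (p : V × V × V × V) : Finset V :=
  {p.1, p.2.1, p.2.2.1, p.2.2.2}

/-- `p = (u', u, v, v')` is a length-three augmenting path for the matching `M` in `G`:
`u'` and `v'` are unmatched and distinct, `(u,v) ∈ M`, and the outer edges are
edges of `G` outside `M`. -/
def IsAugPath3 (G : SimpleGraph V) (M : Finset (Sym2 V)) (p : V × V × V × V) : Prop :=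
  p.1 ≠ p.2.2.2 ∧ ¬ Matched M p.1 ∧ ¬ Matched M p.2.2.2 ∧
  s(p.2.1, p.2.2.1) ∈ M ∧
  s(p.1, p.2.1) ∈ G.edgeSet ∧ s(p.1, p.2.1) ∉ M ∧
  s(p.2.2.1, p.2.2.2) ∈ G.edgeSet ∧ s(p.2.2.1, p.2.2.2) ∉ M

/-- The paths in `P` are pairwise vertex-disjoint. -/
def PairwiseDisjointPaths [DecidableEq V] (P : Finset (V × V × V × V)) : Prop :=
  ∀ p ∈ P, ∀ q ∈ P, p ≠ q → Disjoint (pathVerts p) (pathVerts q)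

lemma sym2_out (m : Sym2 V) : s(m.out.1, m.out.2) = m := by rw [Sym2.mk, m.out_eq]

open Classical in
noncomputable def partner (N : Finset (Sym2 V)) (v : V) : V :=
  if h : Matched N v then Sym2.Mem.other h.choose_spec.2 else v

lemma partner_spec {N : Finset (Sym2 V)} {v : V} (h : Matched N v) :
    s(v, partner N v) ∈ N := by
  rw [partner, dif_pos h, Sym2.other_spec]
  exact h.choose_spec.1

lemma partner_eq {N : Finset (Sym2 V)}
    (hN : ∀ e ∈ N, ∀ f ∈ N, e ≠ f → ∀ v : V, v ∈ e → v ∉ f)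
    {a b : V} (h : s(a, b) ∈ N) : partner N a = b := by
  have hm : Matched N a := ⟨_, h, Sym2.mem_mk_left a b⟩
  rw [partner, dif_pos hm]
  have he : hm.choose ∈ N := hm.choose_spec.1
  have heq : hm.choose = s(a, b) := by
    by_contra hne
    exact hN _ he _ h hne a hm.choose_spec.2 (Sym2.mem_mk_left a b)
  exact Sym2.congr_right.mp ((Sym2.other_spec hm.choose_spec.2).trans heq)

lemma matched_partner {N : Finset (Sym2 V)} {v : V} (h : Matched N v) :
    Matched N (partner N v) := ⟨_, partner_spec h, Sym2.mem_mk_right _ _⟩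

lemma partner_partner {N : Finset (Sym2 V)}
    (hN : ∀ e ∈ N, ∀ f ∈ N, e ≠ f → ∀ v : V, v ∈ e → v ∉ f)
    {v : V} (h : Matched N v) : partner N (partner N v) = v :=
  partner_eq hN (Sym2.eq_swap ▸ partner_spec h)

theorem small_maximal_matching_many_aug_paths [Fintype V] [DecidableEq V]
    (G : SimpleGraph V) (M : Finset (Sym2 V)) (c : ℝ)
    (hmax : IsMaximalMatching G M)
    (hsize : (M.card : ℝ) ≤ (1/2 + c) * matchNum G) :
    ∃ P : Finset (V × V × V × V),
      (∀ p ∈ P, IsAugPath3 G M p) ∧ PairwiseDisjointPaths P ∧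
      (1/2 - 3*c) * matchNum G ≤ (P.card : ℝ) := by
  classical
  obtain ⟨⟨hMe, hMd⟩, hmaxp⟩ := hmax
  -- obtain a maximum matching W
  have hne : (0:ℕ) ∈ {n | ∃ N : Finset (Sym2 V), IsMatching G N ∧ N.card = n} :=
    ⟨∅, ⟨fun e he => absurd he (Finset.notMem_empty e),
         fun e he => absurd he (Finset.notMem_empty e)⟩, rfl⟩
  have hbdd : BddAbove {n | ∃ N : Finset (Sym2 V), IsMatching G N ∧ N.card = n} := by
    refine ⟨Fintype.card (Sym2 V), fun n hn => ?_⟩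
    obtain ⟨N, _, rfl⟩ := hn
    exact Finset.card_le_univ N
  obtain ⟨W, ⟨hWe, hWd⟩, hWcard⟩ := Nat.sSup_mem ⟨0, hne⟩ hbdd
  have hWcard' : W.card = matchNum G := hWcard
  -- basic vertex sets
  set A : Finset V := Finset.univ.filter (fun v => Matched W v) with hA_def
  set B : Finset V := Finset.univ.filter (fun v => Matched M v) with hB_def
  set F : Finset V := A \ B with hF_def
  -- every Sym2 splits
  have hpair : ∀ m : Sym2 V, ∃ a b : V, m = s(a, b) :=
    fun m => ⟨m.out.1, m.out.2, (sym2_out m).symm⟩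
  -- |A| ≥ 2 μ
  have hA : 2 * matchNum G ≤ A.card := by
    have hsub : W.biUnion (fun e => Finset.univ.filter (fun x => x ∈ e)) ⊆ A := by
      intro x hx
      obtain ⟨e, he, hxe⟩ := Finset.mem_biUnion.mp hx
      exact Finset.mem_filter.mpr ⟨Finset.mem_univ x, ⟨e, he, (Finset.mem_filter.mp hxe).2⟩⟩
    have hcard : (W.biUnion (fun e => Finset.univ.filter (fun x => x ∈ e))).card
        = ∑ e ∈ W, (Finset.univ.filter (fun x => x ∈ e)).card := by
      apply Finset.card_biUnion
      intro e he f hf hef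
      refine Finset.disjoint_left.mpr (fun x hx hx' => ?_)
      exact hWd e he f hf hef x (Finset.mem_filter.mp hx).2 (Finset.mem_filter.mp hx').2
    have heach : ∀ e ∈ W, (Finset.univ.filter (fun x => x ∈ e)).card = 2 := by
      intro e he
      obtain ⟨a, b, rfl⟩ := hpair e
      have hab : a ≠ b := by
        intro h
        exact G.not_isDiag_of_mem_edgeSet (hWe _ he) (by simp [h])
      have : Finset.univ.filter (fun x => x ∈ s(a,b)) = {a, b} := by
        ext x; simp [Sym2.mem_iff]
      rw [this, Finset.card_insert_of_notMem (by simp [hab]), Finset.card_singleton]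
    calc 2 * matchNum G = ∑ e ∈ W, 2 := by
          rw [Finset.sum_const, smul_eq_mul, hWcard', Nat.mul_comm]
      _ = ∑ e ∈ W, (Finset.univ.filter (fun x => x ∈ e)).card :=
          (Finset.sum_congr rfl heach).symm
      _ = _ := hcard.symm
      _ ≤ A.card := Finset.card_le_card hsub
  -- |B| ≤ 2 |M|
  have hB : B.card ≤ 2 * M.card := by
    have hsub : B ⊆ M.biUnion (fun e => Finset.univ.filter (fun x => x ∈ e)) := by
      intro x hx
      obtain ⟨e, he, hxe⟩ := (Finset.mem_filter.mp hx).2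
      exact Finset.mem_biUnion.mpr ⟨e, he, Finset.mem_filter.mpr ⟨Finset.mem_univ x, hxe⟩⟩
    calc B.card ≤ _ := Finset.card_le_card hsub
      _ ≤ ∑ e ∈ M, (Finset.univ.filter (fun x => x ∈ e)).card := Finset.card_biUnion_le
      _ ≤ ∑ e ∈ M, 2 := by
          refine Finset.sum_le_sum (fun e he => ?_)
          obtain ⟨a, b, rfl⟩ := hpair e
          have : Finset.univ.filter (fun x => x ∈ s(a,b)) ⊆ {a, b} := by
            intro x hx; simp [Sym2.mem_iff] at hx ⊢; exact hx
          exact (Finset.card_le_card this).trans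
            ((Finset.card_insert_le a {b}).trans (by simp))
      _ = 2 * M.card := by rw [Finset.sum_const, smul_eq_mul, Nat.mul_comm]
  -- structure of F-vertices
  have hFfact : ∀ v ∈ F, ¬ Matched M v ∧ Matched W v := by
    intro v hv
    obtain ⟨hvA, hvB⟩ := Finset.mem_sdiff.mp hv
    exact ⟨fun h => hvB (Finset.mem_filter.mpr ⟨Finset.mem_univ v, h⟩),
      (Finset.mem_filter.mp hvA).2⟩
  have hMpartner : ∀ v ∈ F, Matched M (partner W v) := by
    intro v hv
    obtain ⟨hvM, hvW⟩ := hFfact v hv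
    have he : s(v, partner W v) ∈ W := partner_spec hvW
    obtain ⟨x, hx, hxm⟩ := hmaxp _ (hWe _ he)
    rcases Sym2.mem_iff.mp hx with rfl | rfl
    · exact absurd hxm hvM
    · exact hxm
  -- the "free endpoint" predicate and good edges
  set freeP : V → Prop := fun x => Matched W x ∧ ¬ Matched M (partner W x) with hfreeP_def
  set GoodE : Finset (Sym2 V) := M.filter (fun m => ∀ x ∈ m, freeP x) with hGoodE_def
  -- fiber map
  set Φ : V → Sym2 V := fun v => s(partner W v, partner M (partner W v)) with hΦ_def
  have hΦmem : ∀ v ∈ F, Φ v ∈ M := fun v hv => partner_spec (hMpartner v hv)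
  -- counting: |F| ≤ |M| + |GoodE|
  have hcount : F.card ≤ M.card + GoodE.card := by
    rw [Finset.card_eq_sum_card_fiberwise hΦmem]
    have hbound : ∀ m ∈ M, (F.filter (fun v => Φ v = m)).card
        ≤ 1 + (if m ∈ GoodE then 1 else 0) := by
      intro m hm
      have hinj : ∀ v₁ ∈ F.filter (fun v => Φ v = m), ∀ v₂ ∈ F.filter (fun v => Φ v = m),
          partner W v₁ = partner W v₂ → v₁ = v₂ := by
        intro v₁ h₁ v₂ h₂ hp
        have hw₁ := (hFfact v₁ (Finset.mem_filter.mp h₁).1).2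
        have hw₂ := (hFfact v₂ (Finset.mem_filter.mp h₂).1).2
        rw [← partner_partner hWd hw₁, hp, partner_partner hWd hw₂]
      have hmaps : ∀ v ∈ F.filter (fun v => Φ v = m),
          partner W v ∈ Finset.univ.filter (fun x => x ∈ m ∧ freeP x) := by
        intro v hv
        obtain ⟨hvF, hvΦ⟩ := Finset.mem_filter.mp hv
        obtain ⟨hvM, hvW⟩ := hFfact v hvF
        refine Finset.mem_filter.mpr ⟨Finset.mem_univ _, ?_, matched_partner hvW, ?_⟩
        · rw [← hvΦ]; exact Sym2.mem_mk_left _ _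
        · rw [partner_partner hWd hvW]; exact hvM
      have hle := Finset.card_le_card_of_injOn (partner W) hmaps
        (fun v₁ h₁ v₂ h₂ h => hinj v₁ h₁ v₂ h₂ h)
      obtain ⟨a, b, rfl⟩ := hpair m
      by_cases hg : s(a,b) ∈ GoodE
      · rw [if_pos hg]
        refine hle.trans ?_
        have : Finset.univ.filter (fun x => x ∈ s(a,b) ∧ freeP x) ⊆ {a, b} := by
          intro x hx
          have := (Finset.mem_filter.mp hx).2.1
          simp [Sym2.mem_iff] at this ⊢; exact this
        exact (Finset.card_le_card this).trans ((Finset.card_insert_le a {b}).trans (by simp))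
      · rw [if_neg hg]
        have hxbad : ∃ x ∈ s(a,b), ¬ freeP x := by
          by_contra hbad
          push_neg at hbad
          exact hg (Finset.mem_filter.mpr ⟨hm, hbad⟩)
        obtain ⟨x, hx, hxf⟩ := hxbad
        refine hle.trans ?_
        rcases Sym2.mem_iff.mp hx with rfl | rfl
        · have : Finset.univ.filter (fun y => y ∈ s(x,b) ∧ freeP y) ⊆ {b} := by
            intro y hy
            obtain ⟨_, hym, hyf⟩ := Finset.mem_filter.mp hy
            rcases Sym2.mem_iff.mp hym with rfl | rfl
            · exact absurd hyf hxf
            · exact Finset.mem_singleton_self _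
          simpa using Finset.card_le_card this
        · have : Finset.univ.filter (fun y => y ∈ s(a,x) ∧ freeP y) ⊆ {a} := by
            intro y hy
            obtain ⟨_, hym, hyf⟩ := Finset.mem_filter.mp hy
            rcases Sym2.mem_iff.mp hym with rfl | rfl
            · exact Finset.mem_singleton_self _
            · exact absurd hyf hxf
          simpa using Finset.card_le_card this
    calc ∑ m ∈ M, (F.filter (fun v => Φ v = m)).card
        ≤ ∑ m ∈ M, (1 + (if m ∈ GoodE then 1 else 0)) := Finset.sum_le_sum hbound
      _ = M.card + GoodE.card := by
          rw [Finset.sum_add_distrib, Finset.sum_const, smul_eq_mul, mul_one,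
            Finset.sum_ite_mem, Finset.inter_eq_right.mpr (Finset.filter_subset _ _),
            Finset.sum_const, smul_eq_mul, mul_one]
  -- key numeric inequality (ℕ)
  have hkey : 2 * matchNum G ≤ 3 * M.card + GoodE.card := by
    have h1 : A.card ≤ F.card + B.card := Finset.card_le_card_sdiff_add_card
    omega
  -- build the paths
  set pOf : Sym2 V → V × V × V × V :=
    fun m => (partner W m.out.1, m.out.1, m.out.2, partner W m.out.2) with hpOf_def
  set P : Finset (V × V × V × V) := GoodE.image pOf with hP_def
  -- facts about good edges
  have hgood : ∀ m ∈ GoodE, m ∈ M ∧ freeP m.out.1 ∧ freeP m.out.2 ∧ m.out.1 ≠ m.out.2 := by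
    intro m hm
    obtain ⟨hmM, hall⟩ := Finset.mem_filter.mp hm
    refine ⟨hmM, hall _ (Sym2.out_fst_mem m), hall _ (Sym2.out_snd_mem m), ?_⟩
    intro h
    exact G.not_isDiag_of_mem_edgeSet (hMe _ hmM)
      (by rw [← sym2_out m]; simp [h])
  have hPath : ∀ m ∈ GoodE, IsAugPath3 G M (pOf m) := by
    intro m hm
    obtain ⟨hmM, ⟨haW, haf⟩, ⟨hbW, hbf⟩, hab⟩ := hgood m hm
    set a := m.out.1
    set b := m.out.2
    have heaW : s(a, partner W a) ∈ W := partner_spec haW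
    have hebW : s(b, partner W b) ∈ W := partner_spec hbW
    refine ⟨?_, haf, hbf, ?_, ?_, ?_, ?_, ?_⟩
    · intro h
      simp only [hpOf_def] at h
      have h1 : partner W (partner W a) = a := partner_partner hWd haW
      have h2 : partner W (partner W b) = b := partner_partner hWd hbW
      rw [h, h2] at h1
      exact hab h1.symm
    · show s(a, b) ∈ M; rw [sym2_out m]; exact hmM
    · show s(partner W a, a) ∈ G.edgeSet
      rw [Sym2.eq_swap]; exact hWe _ heaW
    · show s(partner W a, a) ∉ M
      intro h; exact haf ⟨_, h, Sym2.mem_mk_left _ _⟩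
    · show s(b, partner W b) ∈ G.edgeSet; exact hWe _ hebW
    · show s(b, partner W b) ∉ M
      intro h; exact hbf ⟨_, h, Sym2.mem_mk_right _ _⟩
  -- classification of path vertices
  have hclass : ∀ m ∈ GoodE, ∀ x ∈ pathVerts (pOf m),
      (Matched M x ∧ x ∈ m) ∨ (¬ Matched M x ∧ partner W x ∈ m) := by
    intro m hm x hx
    obtain ⟨hmM, ⟨haW, haf⟩, ⟨hbW, hbf⟩, hab⟩ := hgood m hm
    have hma : m.out.1 ∈ m := Sym2.out_fst_mem m
    have hmb : m.out.2 ∈ m := Sym2.out_snd_mem m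
    simp only [pathVerts, hpOf_def, Finset.mem_insert, Finset.mem_singleton] at hx
    rcases hx with rfl | rfl | rfl | rfl
    · exact Or.inr ⟨haf, by rw [partner_partner hWd haW]; exact hma⟩
    · exact Or.inl ⟨⟨m, hmM, hma⟩, hma⟩
    · exact Or.inl ⟨⟨m, hmM, hmb⟩, hmb⟩
    · exact Or.inr ⟨hbf, by rw [partner_partner hWd hbW]; exact hmb⟩
  -- injectivity of pOf on GoodE
  have hinjP : Set.InjOn pOf GoodE := by
    intro m hm m' hm' h
    have : s(m.out.1, m.out.2) = s(m'.out.1, m'.out.2) := by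
      have h2 : (pOf m).2.1 = (pOf m').2.1 := by rw [h]
      have h3 : (pOf m).2.2.1 = (pOf m').2.2.1 := by rw [h]
      simp only [hpOf_def] at h2 h3
      rw [h2, h3]
    rwa [sym2_out, sym2_out] at this
  refine ⟨P, ?_, ?_, ?_⟩
  · intro p hp
    obtain ⟨m, hm, rfl⟩ := Finset.mem_image.mp hp
    exact hPath m hm
  · intro p hp q hq hpq
    obtain ⟨m, hm, rfl⟩ := Finset.mem_image.mp hp
    obtain ⟨m', hm', rfl⟩ := Finset.mem_image.mp hq
    have hmm' : m ≠ m' := fun h => hpq (by rw [h])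
    have hmM : m ∈ M := (hgood m hm).1
    have hmM' : m' ∈ M := (hgood m' hm').1
    refine Finset.disjoint_left.mpr (fun x hx hx' => ?_)
    rcases hclass m hm x hx with ⟨hmat, hxm⟩ | ⟨hunm, hxm⟩ <;>
      rcases hclass m' hm' x hx' with ⟨hmat', hxm'⟩ | ⟨hunm', hxm'⟩
    · exact hMd m hmM m' hmM' hmm' x hxm hxm'
    · exact hunm' hmat
    · exact hunm hmat'
    · exact hMd m hmM m' hmM' hmm' (partner W x) hxm hxm'
  · have hPcard : P.card = GoodE.card := Finset.card_image_of_injOn hinjP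
    have hg : (2 * matchNum G : ℝ) ≤ 3 * M.card + GoodE.card := by
      exact_mod_cast hkey
    rw [hPcard]
    nlinarith [hg, hsize]
end

section
/- Let 𝒫 be a set of 3-augmenting paths with respect to a matching M₁ in a graph, such that the two outer (M₁-unmatched) endpoints of every path lie on opposite sides of a fixed bipartition of the unmatched vertices, each M₁-matched vertex belongs to at most one path in 𝒫, and each unmatched vertex belongs to at most b paths in 𝒫. Then 𝒫 contains a subset 𝒫' of fully vertex-disjoint paths with |𝒫'| ≥ |𝒫|/b. -/
variable {V : Type*}

open Classical in
lemma aux_hall {E W : Type*} [DecidableEq E] [DecidableEq W]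
    (P : Finset E) (l r : E → W) (b : ℕ) (hb : 0 < b)
    (hld : ∀ v, (P.filter fun p => l p = v).card ≤ b)
    (hrd : ∀ v, (P.filter fun p => r p = v).card ≤ b) :
    ∃ P' : Finset E, P' ⊆ P ∧ Set.InjOn l ↑P' ∧ Set.InjOn r ↑P' ∧
      P.card ≤ b * P'.card := by
  classical
  set A : Finset W := P.image l with hA
  set k : ℕ := (P.card + b - 1) / b with hk
  -- ceiling facts
  have hceil : ∀ x : ℕ, P.card ≤ b * x → k ≤ x := by
    intro x hx
    rw [hk, Nat.div_le_iff_le_mul_add_pred hb]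
    omega
  have hbk : P.card ≤ b * k := by
    have hq := Nat.div_add_mod (P.card + b - 1) b
    have hm := Nat.mod_lt (P.card + b - 1) hb
    rw [hk]; omega
  -- every edge's left endpoint is in A
  have hlA : ∀ p ∈ P, l p ∈ A := fun p hp => Finset.mem_image_of_mem l hp
  -- P.card ≤ b * A.card, hence k ≤ A.card
  have hdegsub : ∀ (S : Finset W), (P.filter fun p => l p ∈ S) ⊆
      S.biUnion fun v => P.filter fun p => l p = v := by
    intro S p hp
    rw [Finset.mem_filter] at hp
    exact Finset.mem_biUnion.2 ⟨l p, hp.2, Finset.mem_filter.2 ⟨hp.1, rfl⟩⟩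
  have hdegcount : ∀ (S : Finset W), (P.filter fun p => l p ∈ S).card ≤ b * S.card := by
    intro S
    calc (P.filter fun p => l p ∈ S).card
        ≤ (S.biUnion fun v => P.filter fun p => l p = v).card :=
          Finset.card_le_card (hdegsub S)
      _ ≤ ∑ v ∈ S, (P.filter fun p => l p = v).card := Finset.card_biUnion_le
      _ ≤ S.card * b := Finset.sum_le_card_nsmul S _ b (fun v _ => hld v)
      _ = b * S.card := mul_comm _ _
  have hkA : k ≤ A.card := by
    apply hceil
    have : (P.filter fun p => l p ∈ A) = P := by
      apply Finset.filter_eq_self.2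
      exact hlA
    calc P.card = (P.filter fun p => l p ∈ A).card := by rw [this]
      _ ≤ b * A.card := hdegcount A
  set d : ℕ := A.card - k with hd
  -- neighborhoods
  set N : {v // v ∈ A} → Finset W := fun v => (P.filter fun p => l p = v.1).image r with hN
  set t : {v // v ∈ A} → Finset (W ⊕ Fin d) :=
    fun v => (N v).image Sum.inl ∪ Finset.univ.image Sum.inr with ht
  -- Hall's condition
  have hall : ∀ S : Finset {v // v ∈ A}, S.card ≤ (S.biUnion t).card := by
    intro S
    rcases S.eq_empty_or_nonempty with hS | ⟨v₀, hv₀⟩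
    · simp [hS]
    set Sv : Finset W := S.image (fun v => v.1) with hSv
    have hSvA : Sv ⊆ A := by
      intro w hw
      obtain ⟨v, _, rfl⟩ := Finset.mem_image.1 hw
      exact v.2
    have hSvcard : Sv.card = S.card :=
      Finset.card_image_of_injective S Subtype.val_injective
    -- count edges with left endpoint in Sv
    have hcount1 : (P.filter fun p => l p ∈ Sv).card ≤ b * (S.biUnion N).card := by
      have hsub : (P.filter fun p => l p ∈ Sv) ⊆
          (S.biUnion N).biUnion fun w => P.filter fun p => r p = w := by
        intro p hp
        rw [Finset.mem_filter] at hp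
        obtain ⟨v, hv, hlv⟩ := Finset.mem_image.1 hp.2
        refine Finset.mem_biUnion.2 ⟨r p, ?_, Finset.mem_filter.2 ⟨hp.1, rfl⟩⟩
        exact Finset.mem_biUnion.2 ⟨v, hv,
          Finset.mem_image_of_mem r (Finset.mem_filter.2 ⟨hp.1, hlv.symm⟩)⟩
      calc (P.filter fun p => l p ∈ Sv).card
          ≤ ((S.biUnion N).biUnion fun w => P.filter fun p => r p = w).card :=
            Finset.card_le_card hsub
        _ ≤ ∑ w ∈ S.biUnion N, (P.filter fun p => r p = w).card := Finset.card_biUnion_le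
        _ ≤ (S.biUnion N).card * b := Finset.sum_le_card_nsmul _ _ b (fun w _ => hrd w)
        _ = b * (S.biUnion N).card := mul_comm _ _
    -- count edges with left endpoint outside Sv
    have hcount2 : (P.filter fun p => ¬ l p ∈ Sv).card ≤ b * (A.card - S.card) := by
      have hsub : (P.filter fun p => ¬ l p ∈ Sv) ⊆ (P.filter fun p => l p ∈ A \ Sv) := by
        intro p hp
        rw [Finset.mem_filter] at hp ⊢
        exact ⟨hp.1, Finset.mem_sdiff.2 ⟨hlA p hp.1, hp.2⟩⟩
      calc (P.filter fun p => ¬ l p ∈ Sv).card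
          ≤ (P.filter fun p => l p ∈ A \ Sv).card := Finset.card_le_card hsub
        _ ≤ b * (A \ Sv).card := hdegcount _
        _ = b * (A.card - S.card) := by rw [Finset.card_sdiff_of_subset hSvA, hSvcard]
    have htotal : P.card ≤ b * ((S.biUnion N).card + (A.card - S.card)) := by
      have := Finset.card_filter_add_card_filter_not (s := P)
        (p := fun p => l p ∈ Sv)
      rw [Nat.mul_add]
      omega
    have hkS : k ≤ (S.biUnion N).card + (A.card - S.card) := hceil _ htotal
    have hScard : S.card ≤ A.card := by
      rw [← hSvcard]; exact Finset.card_le_card hSvA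
    -- the biUnion of t contains the inl-image of biUnion N plus all dummies
    have hsub2 : ((S.biUnion N).image Sum.inl ∪
        (Finset.univ : Finset (Fin d)).image Sum.inr) ⊆ S.biUnion t := by
      apply Finset.union_subset
      · intro x hx
        obtain ⟨w, hw, rfl⟩ := Finset.mem_image.1 hx
        obtain ⟨v, hv, hwv⟩ := Finset.mem_biUnion.1 hw
        exact Finset.mem_biUnion.2 ⟨v, hv,
          Finset.mem_union_left _ (Finset.mem_image_of_mem _ hwv)⟩
      · intro x hx
        exact Finset.mem_biUnion.2 ⟨v₀, hv₀, Finset.mem_union_right _ hx⟩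
    have hcardU : ((S.biUnion N).image Sum.inl ∪
        (Finset.univ : Finset (Fin d)).image Sum.inr).card = (S.biUnion N).card + d := by
      have hdisj : Disjoint ((S.biUnion N).image (Sum.inl : W → W ⊕ Fin d))
          ((Finset.univ : Finset (Fin d)).image Sum.inr) := by
        rw [Finset.disjoint_left]
        rintro x hx hx'
        obtain ⟨w, _, rfl⟩ := Finset.mem_image.1 hx
        obtain ⟨j, _, hj⟩ := Finset.mem_image.1 hx'
        exact Sum.inl_ne_inr hj.symm
      rw [Finset.card_union_of_disjoint hdisj,
        Finset.card_image_of_injective _ Sum.inl_injective,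
        Finset.card_image_of_injective _ Sum.inr_injective, Finset.card_univ, Fintype.card_fin]
    calc S.card ≤ (S.biUnion N).card + d := by omega
      _ = ((S.biUnion N).image Sum.inl ∪
          (Finset.univ : Finset (Fin d)).image Sum.inr).card := hcardU.symm
      _ ≤ (S.biUnion t).card := Finset.card_le_card hsub2
  obtain ⟨f, hfinj, hft⟩ := (Finset.all_card_le_biUnion_card_iff_exists_injective t).1 hall
  -- the set of left-vertices sent to a real right-vertex
  set AL : Finset {v // v ∈ A} := Finset.univ.filter (fun v => (f v).isLeft) with hAL
  have hALcard : k ≤ AL.card := by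
    have hrest : (Finset.univ.filter (fun v : {v // v ∈ A} => ¬ (f v).isLeft)).card ≤ d := by
      have : (Finset.univ.filter (fun v : {v // v ∈ A} => ¬ (f v).isLeft)).card ≤
          ((Finset.univ : Finset (Fin d)).image (Sum.inr : Fin d → W ⊕ Fin d)).card := by
        apply Finset.card_le_card_of_injOn f
        · intro v hv
          rw [Finset.mem_coe, Finset.mem_filter] at hv
          rcases hx : f v with w | j
          · rw [hx] at hv; simp at hv
          · exact Finset.mem_image_of_mem _ (Finset.mem_univ j)
        · exact fun a _ b _ h => hfinj h
      calc _ ≤ _ := this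
        _ ≤ (Finset.univ : Finset (Fin d)).card := Finset.card_image_le
        _ = d := by rw [Finset.card_univ, Fintype.card_fin]
    have huniv : (Finset.univ : Finset {v // v ∈ A}).card = A.card := by
      rw [Finset.card_univ, Fintype.card_coe]
    have := Finset.card_filter_add_card_filter_not
      (s := (Finset.univ : Finset {v // v ∈ A})) (p := fun v => (f v).isLeft)
    rw [hAL]
    omega
  -- select one edge per vertex of AL
  have hsel : ∀ v : {x // x ∈ AL}, ∃ p, p ∈ P ∧ l p = v.1.1 ∧ Sum.inl (r p) = f v.1 := by
    rintro ⟨v, hv⟩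
    rw [hAL, Finset.mem_filter] at hv
    obtain ⟨w, hw⟩ := Sum.isLeft_iff.1 hv.2
    have := hft v
    rw [ht, hw] at this
    rcases Finset.mem_union.1 this with hmem | hmem
    · obtain ⟨w', hw', hww⟩ := Finset.mem_image.1 hmem
      obtain ⟨p, hp, hrp⟩ := Finset.mem_image.1 hw'
      rw [Finset.mem_filter] at hp
      refine ⟨p, hp.1, hp.2, ?_⟩
      rw [hw, hrp]; exact hww
    · obtain ⟨j, _, hj⟩ := Finset.mem_image.1 hmem
      exact absurd hj (Sum.inr_ne_inl)
  set g : {x // x ∈ AL} → E := fun v => (hsel v).choose with hg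
  have hgP : ∀ v, g v ∈ P := fun v => (hsel v).choose_spec.1
  have hgl : ∀ v, l (g v) = v.1.1 := fun v => (hsel v).choose_spec.2.1
  have hgr : ∀ v, Sum.inl (r (g v)) = f v.1 := fun v => (hsel v).choose_spec.2.2
  have hginj : Function.Injective g := by
    intro v v' h
    have : v.1.1 = v'.1.1 := by rw [← hgl v, ← hgl v', h]
    exact Subtype.ext (Subtype.ext this)
  refine ⟨AL.attach.image g, ?_, ?_, ?_, ?_⟩
  · intro p hp
    obtain ⟨v, _, rfl⟩ := Finset.mem_image.1 hp
    exact hgP v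
  · rintro p hp q hq hlpq
    obtain ⟨v, _, rfl⟩ := Finset.mem_image.1 (by exact_mod_cast hp)
    obtain ⟨v', _, rfl⟩ := Finset.mem_image.1 (by exact_mod_cast hq)
    have : v.1.1 = v'.1.1 := by rw [← hgl v, ← hgl v', hlpq]
    exact congrArg g (Subtype.ext (Subtype.ext this))
  · rintro p hp q hq hrpq
    obtain ⟨v, _, rfl⟩ := Finset.mem_image.1 (by exact_mod_cast hp)
    obtain ⟨v', _, rfl⟩ := Finset.mem_image.1 (by exact_mod_cast hq)
    have hf : f v.1 = f v'.1 := by rw [← hgr v, ← hgr v', hrpq]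
    exact congrArg g (Subtype.ext (hfinj hf))
  · have hcard : (AL.attach.image g).card = AL.card := by
      rw [Finset.card_image_of_injective _ hginj, Finset.card_attach]
    rw [hcard]
    calc P.card ≤ b * k := hbk
      _ ≤ b * AL.card := Nat.mul_le_mul_left b hALcard

theorem disjointify_aug_paths [Fintype V] [DecidableEq V]
    (G : SimpleGraph V) (M₁ : Finset (Sym2 V)) (hM₁ : IsMatching G M₁)
    (b : ℕ) (hb : 0 < b)
    (P : Finset (V × V × V × V)) (hP : ∀ p ∈ P, IsAugPath3 G M₁ p)
    (L : Set V)
    (hopp : ∀ p ∈ P, p.1 ∈ L ↔ p.2.2.2 ∉ L)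
    (hmatched : ∀ v : V, Matched M₁ v →
      (P.filter (fun p => v ∈ pathVerts p)).card ≤ 1)
    (hunmatched : ∀ v : V, ¬ Matched M₁ v →
      (P.filter (fun p => v ∈ pathVerts p)).card ≤ b) :
    ∃ P' : Finset (V × V × V × V), P' ⊆ P ∧ PairwiseDisjointPaths P' ∧
      (P.card : ℝ) / b ≤ (P'.card : ℝ) := by
  classical
  set l : V × V × V × V → V := fun p => if p.1 ∈ L then p.1 else p.2.2.2 with hl
  set r : V × V × V × V → V := fun p => if p.1 ∈ L then p.2.2.2 else p.1 with hr
  -- basic facts about paths in P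
  have hmid1 : ∀ p ∈ P, Matched M₁ p.2.1 := fun p hp =>
    ⟨s(p.2.1, p.2.2.1), (hP p hp).2.2.2.1, Sym2.mem_mk_left _ _⟩
  have hmid2 : ∀ p ∈ P, Matched M₁ p.2.2.1 := fun p hp =>
    ⟨s(p.2.1, p.2.2.1), (hP p hp).2.2.2.1, Sym2.mem_mk_right _ _⟩
  have hlr : ∀ p, (l p = p.1 ∧ r p = p.2.2.2) ∨ (l p = p.2.2.2 ∧ r p = p.1) := by
    intro p
    by_cases h : p.1 ∈ L <;> simp [hl, hr, h]
  have hlL : ∀ p ∈ P, l p ∈ L := by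
    intro p hp
    by_cases h : p.1 ∈ L
    · simpa [hl, h] using h
    · have : p.2.2.2 ∈ L := by
        by_contra hc; exact h ((hopp p hp).2 hc)
      simpa [hl, h] using this
  have hrL : ∀ p ∈ P, r p ∉ L := by
    intro p hp
    by_cases h : p.1 ∈ L
    · simpa [hr, h] using (hopp p hp).1 h
    · simpa [hr, h] using h
  have hlun : ∀ p ∈ P, ¬ Matched M₁ (l p) := by
    intro p hp
    rcases hlr p with ⟨h, _⟩ | ⟨h, _⟩
    · rw [h]; exact (hP p hp).2.1
    · rw [h]; exact (hP p hp).2.2.1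
  have hrun : ∀ p ∈ P, ¬ Matched M₁ (r p) := by
    intro p hp
    rcases hlr p with ⟨_, h⟩ | ⟨_, h⟩
    · rw [h]; exact (hP p hp).2.2.1
    · rw [h]; exact (hP p hp).2.1
  have hlpv : ∀ p, l p ∈ pathVerts p := by
    intro p
    rcases hlr p with ⟨h, _⟩ | ⟨h, _⟩ <;> rw [h] <;> simp [pathVerts]
  have hrpv : ∀ p, r p ∈ pathVerts p := by
    intro p
    rcases hlr p with ⟨_, h⟩ | ⟨_, h⟩ <;> rw [h] <;> simp [pathVerts]
  -- degree bounds
  have hld : ∀ v, (P.filter fun p => l p = v).card ≤ b := by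
    intro v
    rcases Finset.eq_empty_or_nonempty (P.filter fun p => l p = v) with he | ⟨p, hp⟩
    · rw [he]; simpa using hb
    · rw [Finset.mem_filter] at hp
      have hvun : ¬ Matched M₁ v := hp.2 ▸ hlun p hp.1
      calc (P.filter fun p => l p = v).card
          ≤ (P.filter (fun p => v ∈ pathVerts p)).card := by
            apply Finset.card_le_card
            intro q hq
            rw [Finset.mem_filter] at hq ⊢
            exact ⟨hq.1, hq.2 ▸ hlpv q⟩
        _ ≤ b := hunmatched v hvun
  have hrd : ∀ v, (P.filter fun p => r p = v).card ≤ b := by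
    intro v
    rcases Finset.eq_empty_or_nonempty (P.filter fun p => r p = v) with he | ⟨p, hp⟩
    · rw [he]; simpa using hb
    · rw [Finset.mem_filter] at hp
      have hvun : ¬ Matched M₁ v := hp.2 ▸ hrun p hp.1
      calc (P.filter fun p => r p = v).card
          ≤ (P.filter (fun p => v ∈ pathVerts p)).card := by
            apply Finset.card_le_card
            intro q hq
            rw [Finset.mem_filter] at hq ⊢
            exact ⟨hq.1, hq.2 ▸ hrpv q⟩
        _ ≤ b := hunmatched v hvun
  obtain ⟨P', hP'sub, hlinj, hrinj, hcard⟩ := aux_hall P l r b hb hld hrd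
  refine ⟨P', hP'sub, ?_, ?_⟩
  · -- pairwise disjointness
    intro p hp q hq hpq
    have hpP := hP'sub hp
    have hqP := hP'sub hq
    rw [Finset.disjoint_left]
    intro v hvp hvq
    -- v is in both paths; first the matched case
    by_cases hvm : Matched M₁ v
    · have hsub : ({p, q} : Finset (V × V × V × V)) ⊆
          P.filter (fun x => v ∈ pathVerts x) := by
        intro x hx
        rcases Finset.mem_insert.1 hx with rfl | hx
        · exact Finset.mem_filter.2 ⟨hpP, hvp⟩
        · rw [Finset.mem_singleton.1 hx]
          exact Finset.mem_filter.2 ⟨hqP, hvq⟩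
      have h2 : 2 ≤ (P.filter (fun x => v ∈ pathVerts x)).card := by
        calc 2 = ({p, q} : Finset (V × V × V × V)).card := (Finset.card_pair hpq).symm
          _ ≤ _ := Finset.card_le_card hsub
      have := hmatched v hvm
      omega
    · -- v is unmatched, so it is an endpoint of both paths
      have hvends : ∀ x ∈ P, v ∈ pathVerts x → v = l x ∨ v = r x := by
        intro x hx hvx
        simp only [pathVerts, Finset.mem_insert, Finset.mem_singleton] at hvx
        rcases hvx with h | h | h | h
        · rcases hlr x with ⟨h1, h2⟩ | ⟨h1, h2⟩
          · exact Or.inl (h.trans h1.symm)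
          · exact Or.inr (h.trans h2.symm)
        · exact absurd (h ▸ hmid1 x hx) hvm
        · exact absurd (h ▸ hmid2 x hx) hvm
        · rcases hlr x with ⟨h1, h2⟩ | ⟨h1, h2⟩
          · exact Or.inr (h.trans h2.symm)
          · exact Or.inl (h.trans h1.symm)
      rcases hvends p hpP hvp with h1 | h1 <;> rcases hvends q hqP hvq with h2 | h2
      · exact hpq (hlinj hp hq (h1.symm.trans h2))
      · exact (hrL q hqP) ((h1.symm.trans h2) ▸ hlL p hpP)
      · exact (hrL p hpP) ((h2.symm.trans h1) ▸ hlL q hqP)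
      · exact hpq (hrinj hp hq (h1.symm.trans h2))
  · rw [div_le_iff₀ (by exact_mod_cast hb)]
    calc (P.card : ℝ) ≤ (b * P'.card : ℕ) := by exact_mod_cast hcard
      _ = (P'.card : ℝ) * b := by push_cast; ring
end

section
/- Let K = (V, E_K) be an (ε, d)-kernel of a graph G with ε ≤ 1/4, and let H_K = {v : d_K(v) ≥ d(1−ε)} be the set of high-degree vertices of K. Then |H_K| ≤ 4·μ(G). -/
variable {V : Type*}

/-- `K` is an `(ε, d)`-kernel of `G`: a subgraph of maximum degree at most `d`
such that every non-kernel edge of `G` has an endpoint of degree at least `d(1-ε)` in `K`. -/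
def IsKernel [Fintype V] [DecidableEq V] (G K : SimpleGraph V) [DecidableRel K.Adj]
    (ε : ℝ) (d : ℕ) : Prop :=
  K ≤ G ∧ (∀ v : V, K.degree v ≤ d) ∧
    ∀ e ∈ G.edgeSet, e ∉ K.edgeSet → ∃ v : V, v ∈ e ∧ (d : ℝ) * (1 - ε) ≤ (K.degree v : ℝ)

lemma matching_unique {G : SimpleGraph V} {M : Finset (Sym2 V)} (h : IsMatching G M)
    {e f : Sym2 V} (he : e ∈ M) (hf : f ∈ M) {v : V} (hve : v ∈ e) (hvf : v ∈ f) : e = f :=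
  by_contra fun hne => h.2 e he f hf hne v hve hvf

lemma isMatching_subset {G : SimpleGraph V} {M M' : Finset (Sym2 V)}
    (h : IsMatching G M) (hs : M' ⊆ M) : IsMatching G M' :=
  ⟨fun e he => h.1 e (hs he), fun e he f hf => h.2 e (hs he) f (hs hf)⟩

lemma isMatching_insert {G : SimpleGraph V} {M : Finset (Sym2 V)} [DecidableEq V]
    (h : IsMatching G M)
    {u w : V} (he : s(u,w) ∈ G.edgeSet) (hu : ¬ Matched M u) (hw : ¬ Matched M w) :
    IsMatching G (insert s(u,w) M) := by
  constructor
  · intro e hee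
    rcases Finset.mem_insert.1 hee with rfl | hm
    · exact he
    · exact h.1 e hm
  · intro e hee f hf hne v hve hvf
    rcases Finset.mem_insert.1 hee with rfl | hem <;> rcases Finset.mem_insert.1 hf with rfl | hfm
    · exact hne rfl
    · rcases Sym2.mem_iff.1 hve with rfl | rfl
      · exact hu ⟨f, hfm, hvf⟩
      · exact hw ⟨f, hfm, hvf⟩
    · rcases Sym2.mem_iff.1 hvf with rfl | rfl
      · exact hu ⟨e, hem, hve⟩
      · exact hw ⟨e, hem, hve⟩
    · exact h.2 e hem f hfm hne v hve hvf

lemma no_edge_unmatched {G : SimpleGraph V} {M : Finset (Sym2 V)} [DecidableEq V]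
    (h : IsMatching G M) (hmax : ∀ M', IsMatching G M' → M'.card ≤ M.card)
    {u w : V} (hadj : G.Adj u w) (hu : ¬ Matched M u) (hw : ¬ Matched M w) : False := by
  have h1 : IsMatching G (insert s(u,w) M) :=
    isMatching_insert h ((SimpleGraph.mem_edgeSet G).2 hadj) hu hw
  have h2 : s(u,w) ∉ M := fun hm => hu ⟨s(u,w), hm, by simp⟩
  have := hmax _ h1
  rw [Finset.card_insert_of_notMem h2] at this
  omega

lemma no_augmenting {G : SimpleGraph V} {M : Finset (Sym2 V)} [DecidableEq V]
    (h : IsMatching G M) (hmax : ∀ M', IsMatching G M' → M'.card ≤ M.card)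
    {a b u u' : V} (hab : s(a,b) ∈ M) (huu' : u ≠ u')
    (hu : ¬ Matched M u) (hu' : ¬ Matched M u')
    (hua : G.Adj u a) (hub : G.Adj u' b) : False := by
  have hGab : G.Adj a b := (SimpleGraph.mem_edgeSet G).1 (h.1 _ hab)
  have hne_ab : a ≠ b := hGab.ne
  have hub' : u ≠ b := fun hh => hu ⟨s(a,b), hab, by simp [hh]⟩
  have hu'a : u' ≠ a := fun hh => hu' ⟨s(a,b), hab, by simp [hh]⟩
  set M₀ := M.erase s(a,b) with hM₀
  have h₀ : IsMatching G M₀ := isMatching_subset h (Finset.erase_subset _ _)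
  have ha₀ : ¬ Matched M₀ a := by
    rintro ⟨f, hf, haf⟩
    rcases Finset.mem_erase.1 hf with ⟨hne, hfM⟩
    exact hne (matching_unique h hfM hab haf (by simp))
  have hb₀ : ¬ Matched M₀ b := by
    rintro ⟨f, hf, hbf⟩
    rcases Finset.mem_erase.1 hf with ⟨hne, hfM⟩
    exact hne (matching_unique h hfM hab hbf (by simp))
  have hu₀ : ¬ Matched M₀ u := fun ⟨f, hf, hx⟩ => hu ⟨f, Finset.mem_of_mem_erase hf, hx⟩
  have hu'₀ : ¬ Matched M₀ u' := fun ⟨f, hf, hx⟩ => hu' ⟨f, Finset.mem_of_mem_erase hf, hx⟩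
  set M₁ := insert s(u',b) M₀ with hM₁
  have h₁ : IsMatching G M₁ := isMatching_insert h₀ ((SimpleGraph.mem_edgeSet G).2 hub) hu'₀ hb₀
  have matched_M₁ : ∀ v, Matched M₁ v → v = u' ∨ v = b ∨ Matched M₀ v := by
    rintro v ⟨f, hf, hvf⟩
    rcases Finset.mem_insert.1 hf with rfl | hfm
    · rcases Sym2.mem_iff.1 hvf with rfl | rfl
      · exact Or.inl rfl
      · exact Or.inr (Or.inl rfl)
    · exact Or.inr (Or.inr ⟨f, hfm, hvf⟩)
  have hu₁ : ¬ Matched M₁ u := by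
    intro hh
    rcases matched_M₁ u hh with h1 | h1 | h1
    exacts [huu' h1, hub' h1, hu₀ h1]
  have ha₁ : ¬ Matched M₁ a := by
    intro hh
    rcases matched_M₁ a hh with h1 | h1 | h1
    exacts [hu'a h1.symm, hne_ab h1, ha₀ h1]
  have h₂ : IsMatching G (insert s(u,a) M₁) :=
    isMatching_insert h₁ ((SimpleGraph.mem_edgeSet G).2 hua) hu₁ ha₁
  have hn1 : s(u,a) ∉ M₁ := fun hm => hu₁ ⟨_, hm, by simp⟩
  have hn2 : s(u',b) ∉ M₀ := fun hm => hu'₀ ⟨_, hm, by simp⟩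
  have hcard := hmax _ h₂
  rw [Finset.card_insert_of_notMem hn1, hM₁, Finset.card_insert_of_notMem hn2,
    Finset.card_erase_of_mem hab] at hcard
  have : 1 ≤ M.card := Finset.card_pos.2 ⟨_, hab⟩
  omega

lemma exists_max_matching [Fintype V] [DecidableEq V] (G : SimpleGraph V) :
    ∃ M : Finset (Sym2 V), IsMatching G M ∧ M.card = matchNum G ∧
      ∀ M', IsMatching G M' → M'.card ≤ M.card := by
  have hbdd : BddAbove {n | ∃ M : Finset (Sym2 V), IsMatching G M ∧ M.card = n} := by
    refine ⟨Fintype.card (Sym2 V), ?_⟩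
    rintro n ⟨M, _, rfl⟩
    exact Finset.card_le_univ M
  have hne : (0:ℕ) ∈ {n | ∃ M : Finset (Sym2 V), IsMatching G M ∧ M.card = n} :=
    ⟨∅, ⟨by simp, by simp⟩, rfl⟩
  have hmem := Nat.sSup_mem ⟨0, hne⟩ hbdd
  obtain ⟨M, hM, hc⟩ := hmem
  exact ⟨M, hM, hc, fun M' hM' => hc ▸ le_csSup hbdd ⟨M', hM', rfl⟩⟩

theorem few_high_degree_kernel_vertices [Fintype V] [DecidableEq V]
    (G K : SimpleGraph V) [DecidableRel K.Adj]
    (ε : ℝ) (d : ℕ) (hd : 0 < d) (hε : ε ≤ 1/4)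
    (hker : IsKernel G K ε d)
    (H : Finset V) (hH : ∀ v : V, v ∈ H ↔ (d : ℝ) * (1 - ε) ≤ (K.degree v : ℝ)) :
    (H.card : ℝ) ≤ 4 * matchNum G := by
  classical
  obtain ⟨M, hM, hMcard, hMmax⟩ := exists_max_matching G
  obtain ⟨hKG, hKdeg, -⟩ := hker
  set S : Finset V := H.filter (fun v => Matched M v) with hS
  set U : Finset V := H.filter (fun v => ¬ Matched M v) with hUdef
  -- choice function: the (unique) matching edge containing a matched vertex
  set g : V → Sym2 V := fun v => if h : Matched M v then h.choose else s(v,v) with hg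
  have hg1 : ∀ v, Matched M v → g v ∈ M ∧ v ∈ g v := by
    intro v h
    simp only [hg, dif_pos h]
    exact ⟨h.choose_spec.1, h.choose_spec.2⟩
  -- Bound 1 : matched high-degree vertices
  have hbound1 : S.card ≤ 2 * M.card := by
    refine Finset.card_le_mul_card_image_of_maps_to (f := g) (t := M)
      (fun v hv => (hg1 v (Finset.mem_filter.1 hv).2).1) 2 ?_
    intro e he
    induction e using Sym2.ind with
    | _ a b =>
      have hsub : (S.filter (fun v => g v = s(a,b))) ⊆ {a, b} := by
        intro v hv
        rcases Finset.mem_filter.1 hv with ⟨hvS, hve⟩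
        have := (hg1 v (Finset.mem_filter.1 hvS).2).2
        rw [hve] at this
        rcases Sym2.mem_iff.1 this with rfl | rfl <;> simp
      calc (S.filter (fun v => g v = s(a,b))).card ≤ ({a, b} : Finset V).card :=
            Finset.card_le_card hsub
        _ ≤ 2 := Finset.card_insert_le _ _ |>.trans (by simp)
  -- the pair set
  set P : Finset (V × V) := Finset.univ.filter (fun p => p.1 ∈ U ∧ K.Adj p.1 p.2) with hP
  have hPmem : ∀ p : V × V, p ∈ P ↔ p.1 ∈ U ∧ K.Adj p.1 p.2 := by
    intro p; simp [hP]
  have hUunm : ∀ u ∈ U, ¬ Matched M u := fun u hu => (Finset.mem_filter.1 hu).2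
  -- second coordinate of a pair is matched
  have hsnd : ∀ p ∈ P, Matched M p.2 := by
    intro p hp
    rcases (hPmem p).1 hp with ⟨hp1, hp2⟩
    by_contra hnm
    exact no_edge_unmatched hM hMmax (hKG hp2) (hUunm _ hp1) hnm
  -- P.card = sum of degrees over U
  have hPcard : P.card = ∑ u ∈ U, K.degree u := by
    rw [Finset.card_eq_sum_card_fiberwise (f := Prod.fst) (t := U)
      (fun p hp => ((hPmem p).1 hp).1)]
    refine Finset.sum_congr rfl ?_
    intro u hu
    rw [SimpleGraph.degree]
    apply Finset.card_bij (fun p _ => p.2)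
    · intro p hp
      rcases Finset.mem_filter.1 hp with ⟨hpP, hp1⟩
      rcases (hPmem p).1 hpP with ⟨-, hadj⟩
      rw [SimpleGraph.mem_neighborFinset]
      rw [hp1] at hadj; exact hadj
    · intro p hp q hq hpq
      rcases Finset.mem_filter.1 hp with ⟨-, hp1⟩
      rcases Finset.mem_filter.1 hq with ⟨-, hq1⟩
      exact Prod.ext (hp1.trans hq1.symm) hpq
    · intro w hw
      rw [SimpleGraph.mem_neighborFinset] at hw
      refine ⟨(u, w), Finset.mem_filter.2 ⟨(hPmem _).2 ⟨hu, hw⟩, rfl⟩, rfl⟩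
  -- P.card ≤ d * M.card
  have hbound2 : P.card ≤ d * M.card := by
    refine Finset.card_le_mul_card_image_of_maps_to (f := fun p => g p.2) (t := M)
      (fun p hp => (hg1 p.2 (hsnd p hp)).1) d ?_
    intro e he
    induction e using Sym2.ind with
    | _ a b =>
      set F := P.filter (fun p => g p.2 = s(a,b)) with hF
      have hFmem : ∀ p ∈ F, (p.2 = a ∨ p.2 = b) ∧ p.1 ∈ U ∧ K.Adj p.1 p.2 := by
        intro p hp
        rcases Finset.mem_filter.1 hp with ⟨hpP, hpe⟩
        have h2 := (hg1 p.2 (hsnd p hpP)).2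
        rw [hpe] at h2
        exact ⟨Sym2.mem_iff.1 h2, (hPmem p).1 hpP⟩
      have habM : s(a,b) ∈ M := he
      have hGab : G.Adj a b := (SimpleGraph.mem_edgeSet G).1 (hM.1 _ habM)
      have hpair : ∀ p ∈ F, ∀ q ∈ F, p.2 = a → q.2 = b → p.1 = q.1 := by
        intro p hp q hq hpa hqb
        by_contra hne
        rcases hFmem p hp with ⟨-, hpU, hpadj⟩
        rcases hFmem q hq with ⟨-, hqU, hqadj⟩
        rw [hpa] at hpadj; rw [hqb] at hqadj
        exact no_augmenting hM hMmax habM hne (hUunm _ hpU) (hUunm _ hqU)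
          (hKG hpadj) (hKG hqadj)
      by_cases hA : ∀ p ∈ F, p.2 = a
      · calc F.card ≤ (K.neighborFinset a).card := by
              apply Finset.card_le_card_of_injOn (fun p => p.1)
              · intro p hp
                rcases hFmem p hp with ⟨-, -, hadj⟩
                rw [hA p hp] at hadj
                rw [Finset.mem_coe, SimpleGraph.mem_neighborFinset]
                exact hadj.symm
              · intro p hp q hq hpq
                exact Prod.ext hpq ((hA p hp).trans (hA q hq).symm)
          _ ≤ d := hKdeg a
      by_cases hB : ∀ p ∈ F, p.2 = b
      · calc F.card ≤ (K.neighborFinset b).card := by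
              apply Finset.card_le_card_of_injOn (fun p => p.1)
              · intro p hp
                rcases hFmem p hp with ⟨-, -, hadj⟩
                rw [hB p hp] at hadj
                rw [Finset.mem_coe, SimpleGraph.mem_neighborFinset]
                exact hadj.symm
              · intro p hp q hq hpq
                exact Prod.ext hpq ((hB p hp).trans (hB q hq).symm)
          _ ≤ d := hKdeg b
      -- mixed case
      push_neg at hA hB
      obtain ⟨pb, hpbF, hpbne⟩ := hA
      obtain ⟨pa, hpaF, hpane⟩ := hB
      have hpb2 : pb.2 = b := ((hFmem pb hpbF).1).resolve_left hpbne
      have hpa2 : pa.2 = a := ((hFmem pa hpaF).1).resolve_right hpane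
      set u₀ := pa.1 with hu₀
      have hu0b : pb.1 = u₀ := (hpair pa hpaF pb hpbF hpa2 hpb2).symm
      have hsub : F ⊆ {(u₀, a), (u₀, b)} := by
        intro p hp
        rcases (hFmem p hp).1 with hp2 | hp2
        · have h1 : p.1 = pb.1 := hpair p hp pb hpbF hp2 hpb2
          have : p = (u₀, a) := Prod.ext (h1.trans hu0b) hp2
          simp [this]
        · have h1 : p.1 = u₀ := (hpair pa hpaF p hp hpa2 hp2).symm
          have : p = (u₀, b) := Prod.ext h1 hp2
          simp [this]
      have h2d : 2 ≤ d := by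
        have hadja : K.Adj u₀ a := by
          have := (hFmem pa hpaF).2.2; rw [hpa2] at this; exact this
        have hadjb : K.Adj u₀ b := by
          have := (hFmem pb hpbF).2.2; rw [hpb2, hu0b] at this; exact this
        have : ({a, b} : Finset V) ⊆ K.neighborFinset u₀ := by
          intro x hx
          rcases Finset.mem_insert.1 hx with rfl | hx
          · rw [SimpleGraph.mem_neighborFinset]; exact hadja
          · rw [Finset.mem_singleton] at hx; subst hx
            rw [SimpleGraph.mem_neighborFinset]; exact hadjb
        have hcard2 : ({a, b} : Finset V).card = 2 :=
          Finset.card_insert_of_notMem (by simp [hGab.ne]) |>.trans (by simp)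
        calc 2 = ({a, b} : Finset V).card := hcard2.symm
          _ ≤ (K.neighborFinset u₀).card := Finset.card_le_card this
          _ ≤ d := hKdeg u₀
      calc F.card ≤ ({(u₀, a), (u₀, b)} : Finset (V × V)).card := Finset.card_le_card hsub
        _ ≤ 2 := Finset.card_insert_le _ _ |>.trans (by simp)
        _ ≤ d := h2d
  -- real arithmetic
  have hdegU : ∀ u ∈ U, (d : ℝ) * (1 - ε) ≤ (K.degree u : ℝ) := by
    intro u hu
    exact (hH u).1 (Finset.mem_filter.1 hu).1
  have hsumU : (U.card : ℝ) * ((d : ℝ) * (1 - ε)) ≤ ∑ u ∈ U, (K.degree u : ℝ) := by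
    have := Finset.card_nsmul_le_sum U (fun u => (K.degree u : ℝ)) _ hdegU
    rwa [nsmul_eq_mul] at this
  have hsum_eq : ∑ u ∈ U, (K.degree u : ℝ) = (P.card : ℝ) := by
    rw [hPcard]; push_cast; ring
  have hkey : (U.card : ℝ) * ((d : ℝ) * (1 - ε)) ≤ (d : ℝ) * M.card := by
    refine hsumU.trans ?_
    rw [hsum_eq]
    calc (P.card : ℝ) ≤ ((d * M.card : ℕ) : ℝ) := by exact_mod_cast hbound2
      _ = (d : ℝ) * M.card := by push_cast; ring
  have hdpos : (0:ℝ) < d := by exact_mod_cast hd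
  have hUb : (U.card : ℝ) * (1 - ε) ≤ (M.card : ℝ) := by
    nlinarith [hkey]
  have hUb2 : (U.card : ℝ) ≤ (4/3) * M.card := by
    nlinarith [hUb, Nat.cast_nonneg (α := ℝ) U.card]
  have hsplit : S.card + U.card = H.card := Finset.card_filter_add_card_filter_not _
  have hS1 : (S.card : ℝ) ≤ 2 * M.card := by exact_mod_cast hbound1
  have hMn : (M.card : ℝ) = (matchNum G : ℝ) := by exact_mod_cast hMcard
  have hMnn : (0:ℝ) ≤ (M.card : ℝ) := Nat.cast_nonneg _
  have : (H.card : ℝ) = (S.card : ℝ) + (U.card : ℝ) := by exact_mod_cast hsplit.symm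
  rw [this, ← hMn]
  linarith
end

section
/- In any graph G, every fractional matching has total value at most (3/2)·μ(G). -/
variable {V : Type*}

def IsFractionalMatching [Fintype V] [DecidableEq V] (G : SimpleGraph V)
    [DecidableRel G.Adj] (x : Sym2 V → ℝ) : Prop :=
  (∀ e, 0 ≤ x e) ∧ (∀ e ∉ G.edgeSet, x e = 0) ∧
    ∀ v : V, ∑ e ∈ G.edgeFinset.filter (fun e => v ∈ e), x e ≤ 1

open Finset

lemma sum_biUnion_le' {α β : Type*} [DecidableEq β] (s : Finset α) (t : α → Finset β)
    (f : β → ℝ) (hf : ∀ i, 0 ≤ f i) :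
    ∑ i ∈ s.biUnion t, f i ≤ ∑ j ∈ s, ∑ i ∈ t j, f i := by
  classical
  induction s using Finset.induction_on with
  | empty => simp
  | insert a s ha ih =>
    rw [Finset.biUnion_insert, Finset.sum_insert ha]
    have h1 : t a ∪ s.biUnion t = t a ∪ (s.biUnion t \ t a) := by
      rw [Finset.union_sdiff_self_eq_union]
    rw [h1, Finset.sum_union (Finset.disjoint_sdiff)]
    have h2 : ∑ i ∈ s.biUnion t \ t a, f i ≤ ∑ i ∈ s.biUnion t, f i :=
      Finset.sum_le_sum_of_subset_of_nonneg (Finset.sdiff_subset) (fun i _ _ => hf i)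
    linarith [ih]

lemma filter_mem_pair [Fintype V] [DecidableEq V] {a b : V} (h : a ≠ b) :
    (Finset.univ.filter (fun v => v ∈ s(a, b))) = {a, b} := by
  ext v; simp [Sym2.mem_iff]

lemma card_filter_mem [Fintype V] [DecidableEq V] {a b : V} (h : a ≠ b) :
    (Finset.univ.filter (fun v => v ∈ s(a, b))).card = 2 := by
  rw [filter_mem_pair h, Finset.card_insert_of_notMem (by simpa using h), Finset.card_singleton]

lemma matchNum_exists [Fintype V] [DecidableEq V] (G : SimpleGraph V) :
    ∃ M : Finset (Sym2 V), IsMatching G M ∧ M.card = matchNum G ∧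
      ∀ N : Finset (Sym2 V), IsMatching G N → N.card ≤ matchNum G := by
  classical
  have hbdd : BddAbove {n | ∃ M : Finset (Sym2 V), IsMatching G M ∧ M.card = n} :=
    ⟨Fintype.card (Sym2 V), by rintro n ⟨M, -, rfl⟩; exact Finset.card_le_univ M⟩
  have hne : {n | ∃ M : Finset (Sym2 V), IsMatching G M ∧ M.card = n}.Nonempty :=
    ⟨0, ∅, ⟨by simp, by simp⟩, rfl⟩
  have hmem := Nat.sSup_mem hne hbdd
  obtain ⟨M, hM, hcard⟩ := hmem
  exact ⟨M, hM, hcard, fun N hN => le_csSup hbdd ⟨N, hN, rfl⟩⟩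

lemma augment {G : SimpleGraph V} {M : Finset (Sym2 V)} (hM : IsMatching G M)
    {u v a b : V} (hm : s(u, v) ∈ M) (hab : a ≠ b)
    (ha : ¬ Matched M a) (hb : ¬ Matched M b)
    (hua : s(u, a) ∈ G.edgeSet) (hvb : s(v, b) ∈ G.edgeSet) :
    ∃ N : Finset (Sym2 V), IsMatching G N ∧ N.card = M.card + 1 := by
  classical
  have huv : u ≠ v := by
    intro h; exact G.not_isDiag_of_mem_edgeSet (hM.1 _ hm) (by simp [h])
  have hua' : u ≠ a := by
    intro h; exact G.not_isDiag_of_mem_edgeSet hua (by simp [h])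
  have hvb' : v ≠ b := by
    intro h; exact G.not_isDiag_of_mem_edgeSet hvb (by simp [h])
  have hMu : Matched M u := ⟨_, hm, by simp⟩
  have hMv : Matched M v := ⟨_, hm, by simp⟩
  have hub : u ≠ b := fun h => hb (h ▸ hMu)
  have hva : v ≠ a := fun h => ha (h ▸ hMv)
  -- vertices of erased matching avoid u, v, a, b's unmatchedness
  have hfa : ∀ f ∈ M.erase s(u, v), a ∉ f := fun f hf hmem =>
    ha ⟨f, Finset.mem_of_mem_erase hf, hmem⟩
  have hfb : ∀ f ∈ M.erase s(u, v), b ∉ f := fun f hf hmem =>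
    hb ⟨f, Finset.mem_of_mem_erase hf, hmem⟩
  have hfu : ∀ f ∈ M.erase s(u, v), u ∉ f := fun f hf =>
    hM.2 _ hm f (Finset.mem_of_mem_erase hf) (Ne.symm (Finset.ne_of_mem_erase hf)) u (by simp)
  have hfv : ∀ f ∈ M.erase s(u, v), v ∉ f := fun f hf =>
    hM.2 _ hm f (Finset.mem_of_mem_erase hf) (Ne.symm (Finset.ne_of_mem_erase hf)) v (by simp)
  have hne2 : s(u, a) ≠ s(v, b) := by
    intro h; rw [Sym2.eq_iff] at h
    rcases h with ⟨h1, h2⟩ | ⟨h1, h2⟩ <;> [exact huv h1; exact hub h1]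
  have hnua : s(u, a) ∉ M.erase s(u, v) := fun h => hfa _ h (by simp)
  have hnvb : s(v, b) ∉ M.erase s(u, v) := fun h => hfb _ h (by simp)
  refine ⟨insert s(u, a) (insert s(v, b) (M.erase s(u, v))), ⟨?_, ?_⟩, ?_⟩
  · intro e he
    rcases Finset.mem_insert.1 he with rfl | he
    · exact hua
    rcases Finset.mem_insert.1 he with rfl | he
    · exact hvb
    · exact hM.1 _ (Finset.mem_of_mem_erase he)
  · intro e he f hf hef w hwe hwf
    rcases Finset.mem_insert.1 he with rfl | he' <;>
      [skip; rcases Finset.mem_insert.1 he' with rfl | he'']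
    · -- e = s(u,a)
      rcases Sym2.mem_iff.1 hwe with rfl | rfl
      · rcases Finset.mem_insert.1 hf with rfl | hf'
        · exact hef rfl
        rcases Finset.mem_insert.1 hf' with rfl | hf''
        · rcases Sym2.mem_iff.1 hwf with h | h <;> [exact huv h; exact hub h]
        · exact hfu _ hf'' hwf
      · rcases Finset.mem_insert.1 hf with rfl | hf'
        · exact hef rfl
        rcases Finset.mem_insert.1 hf' with rfl | hf''
        · rcases Sym2.mem_iff.1 hwf with h | h <;> [exact hva h.symm; exact hab h]
        · exact hfa _ hf'' hwf
    · -- e = s(v,b)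
      rcases Sym2.mem_iff.1 hwe with rfl | rfl
      · rcases Finset.mem_insert.1 hf with rfl | hf'
        · rcases Sym2.mem_iff.1 hwf with h | h <;> [exact huv h.symm; exact hva h]
        rcases Finset.mem_insert.1 hf' with rfl | hf''
        · exact hef rfl
        · exact hfv _ hf'' hwf
      · rcases Finset.mem_insert.1 hf with rfl | hf'
        · rcases Sym2.mem_iff.1 hwf with h | h <;> [exact hub h.symm; exact hab h.symm]
        rcases Finset.mem_insert.1 hf' with rfl | hf''
        · exact hef rfl
        · exact hfb _ hf'' hwf
    · -- e ∈ erase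
      rcases Finset.mem_insert.1 hf with rfl | hf'
      · rcases Sym2.mem_iff.1 hwf with rfl | rfl <;> [exact hfu _ he'' hwe; exact hfa _ he'' hwe]
      rcases Finset.mem_insert.1 hf' with rfl | hf''
      · rcases Sym2.mem_iff.1 hwf with rfl | rfl <;> [exact hfv _ he'' hwe; exact hfb _ he'' hwe]
      · exact hM.2 _ (Finset.mem_of_mem_erase he'') _ (Finset.mem_of_mem_erase hf'') hef w hwe hwf
  · rw [Finset.card_insert_of_notMem (by simp [hne2, hnua]),
      Finset.card_insert_of_notMem hnvb, Finset.card_erase_of_mem hm]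
    have : 1 ≤ M.card := Finset.card_pos.2 ⟨_, hm⟩
    omega

lemma maximal_of_max {G : SimpleGraph V} {M : Finset (Sym2 V)} (hM : IsMatching G M)
    (hmax : ∀ N : Finset (Sym2 V), IsMatching G N → N.card ≤ M.card) :
    ∀ e ∈ G.edgeSet, ∃ w, w ∈ e ∧ Matched M w := by
  classical
  intro e he
  induction e with
  | _ c d =>
    by_contra hcon
    push_neg at hcon
    have hc : ¬ Matched M c := hcon c (by simp)
    have hd : ¬ Matched M d := hcon d (by simp)
    have hcd : c ≠ d := fun h => G.not_isDiag_of_mem_edgeSet he (by simp [h])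
    have hnm : s(c, d) ∉ M := fun h => hc ⟨_, h, by simp⟩
    have hN : IsMatching G (insert s(c, d) M) := by
      refine ⟨?_, ?_⟩
      · intro e' he'
        rcases Finset.mem_insert.1 he' with rfl | he' <;> [exact he; exact hM.1 _ he']
      · intro e' he' f hf hef w hwe hwf
        rcases Finset.mem_insert.1 he' with rfl | he'' <;>
          rcases Finset.mem_insert.1 hf with rfl | hf''
        · exact hef rfl
        · rcases Sym2.mem_iff.1 hwe with rfl | rfl <;>
            [exact hc ⟨_, hf'', hwf⟩; exact hd ⟨_, hf'', hwf⟩]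
        · rcases Sym2.mem_iff.1 hwf with rfl | rfl <;>
            [exact hc ⟨_, he'', hwe⟩; exact hd ⟨_, he'', hwe⟩]
        · exact hM.2 _ he'' _ hf'' hef w hwe hwf
    have := hmax _ hN
    rw [Finset.card_insert_of_notMem hnm] at this
    omega

theorem fractional_matching_integrality_gap [Fintype V] [DecidableEq V]
    (G : SimpleGraph V) [DecidableRel G.Adj]
    (x : Sym2 V → ℝ) (hx : IsFractionalMatching G x) :
    ∑ e ∈ G.edgeFinset, x e ≤ (3/2 : ℝ) * matchNum G := by
  classical
  obtain ⟨M, hM, hcard, hmaxN⟩ := matchNum_exists G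
  have hmax' : ∀ N : Finset (Sym2 V), IsMatching G N → N.card ≤ M.card :=
    fun N hN => hcard ▸ hmaxN N hN
  have hmaximal := maximal_of_max hM hmax'
  obtain ⟨hx0, hxe, hxd⟩ := hx
  set E := G.edgeFinset with hE
  set k := M.card with hk
  have hmemE : ∀ e ∈ E, e ∈ G.edgeSet := fun e he => SimpleGraph.mem_edgeFinset.mp he
  -- Step A : double counting
  have stepA : ∑ v : V, ∑ e ∈ E.filter (fun e => v ∈ e), x e = 2 * ∑ e ∈ E, x e := by
    have h1 : ∀ v : V, ∑ e ∈ E.filter (fun e => v ∈ e), x e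
        = ∑ e ∈ E, if v ∈ e then x e else 0 := fun v => Finset.sum_filter _ _
    rw [Finset.sum_congr rfl (fun v _ => h1 v), Finset.sum_comm, Finset.mul_sum]
    refine Finset.sum_congr rfl ?_
    intro e
    induction e using Sym2.ind with
    | _ a b =>
      intro he
      have hab : a ≠ b := fun h =>
        G.not_isDiag_of_mem_edgeSet (hmemE _ he) (by simp [h])
      rw [← Finset.sum_filter, Finset.sum_const, card_filter_mem hab]
      push_cast; ring
  have degle : ∀ v : V, ∑ e ∈ E.filter (fun e => v ∈ e), x e ≤ 1 := hxd
  have degnn : ∀ v : V, 0 ≤ ∑ e ∈ E.filter (fun e => v ∈ e), x e :=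
    fun v => Finset.sum_nonneg fun e _ => hx0 e
  set Mv := Finset.univ.filter (fun v => Matched M v) with hMv
  set Un := Finset.univ.filter (fun v => ¬ Matched M v) with hUn
  have hsplit : ∑ v ∈ Mv, (∑ e ∈ E.filter (fun e => v ∈ e), x e)
      + ∑ v ∈ Un, (∑ e ∈ E.filter (fun e => v ∈ e), x e)
      = ∑ v : V, ∑ e ∈ E.filter (fun e => v ∈ e), x e :=
    Finset.sum_filter_add_sum_filter_not _ _ _
  -- Step B : matched vertices
  have hMvcard : Mv.card ≤ 2 * k := by
    have hsub : Mv ⊆ M.biUnion (fun m => Finset.univ.filter (fun v => v ∈ m)) := by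
      intro v hv
      obtain ⟨m, hm, hvm⟩ := (Finset.mem_filter.1 hv).2
      exact Finset.mem_biUnion.2 ⟨m, hm, Finset.mem_filter.2 ⟨Finset.mem_univ _, hvm⟩⟩
    refine le_trans (Finset.card_le_card hsub) (le_trans Finset.card_biUnion_le ?_)
    have : ∀ m ∈ M, (Finset.univ.filter (fun v => v ∈ m)).card = 2 := by
      intro m
      induction m using Sym2.ind with
      | _ a b =>
        intro hm
        exact card_filter_mem (fun h => G.not_isDiag_of_mem_edgeSet (hM.1 _ hm) (by simp [h]))
    rw [Finset.sum_congr rfl this, Finset.sum_const, smul_eq_mul, hk]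
    omega
  have stepB : ∑ v ∈ Mv, (∑ e ∈ E.filter (fun e => v ∈ e), x e) ≤ 2 * (k : ℝ) := by
    calc ∑ v ∈ Mv, (∑ e ∈ E.filter (fun e => v ∈ e), x e)
        ≤ ∑ v ∈ Mv, (1 : ℝ) := Finset.sum_le_sum fun v _ => degle v
      _ = (Mv.card : ℝ) := by rw [Finset.sum_const, nsmul_eq_mul, mul_one]
      _ ≤ 2 * (k : ℝ) := by exact_mod_cast Nat.cast_le.2 hMvcard
  -- Step C : unmatched vertices
  set T := E.filter (fun e => ∃ w, w ∈ e ∧ ¬ Matched M w) with hT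
  have stepC1 : ∑ v ∈ Un, (∑ e ∈ E.filter (fun e => v ∈ e), x e) ≤ ∑ e ∈ T, x e := by
    have h1 : ∀ v ∈ Un, ∑ e ∈ E.filter (fun e => v ∈ e), x e
        = ∑ e ∈ E, if v ∈ e then x e else 0 := fun v _ => Finset.sum_filter _ _
    rw [Finset.sum_congr rfl h1, Finset.sum_comm]
    have h2 : ∑ e ∈ T, x e = ∑ e ∈ E, if (∃ w, w ∈ e ∧ ¬ Matched M w) then x e else 0 :=
      Finset.sum_filter _ _
    rw [h2]
    refine Finset.sum_le_sum ?_
    intro e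
    induction e using Sym2.ind with
    | _ a b =>
      intro he
      have hab : a ≠ b := fun h =>
        G.not_isDiag_of_mem_edgeSet (hmemE _ he) (by simp [h])
      rw [← Finset.sum_filter, Finset.sum_const, nsmul_eq_mul]
      by_cases hw : ∃ w, w ∈ s(a, b) ∧ ¬ Matched M w
      · rw [if_pos hw]
        have hc1 : (Un.filter (fun v => v ∈ s(a, b))).card ≤ 1 := by
          obtain ⟨w0, hw0, hw0m⟩ := hmaximal _ (hmemE _ he)
          refine Finset.card_le_one.2 ?_
          intro p hp q hq
          have hp' := Finset.mem_filter.1 hp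
          have hq' := Finset.mem_filter.1 hq
          have hpm := (Finset.mem_filter.1 hp'.1).2
          have hqm := (Finset.mem_filter.1 hq'.1).2
          rcases Sym2.mem_iff.1 hp'.2 with rfl | rfl <;>
            rcases Sym2.mem_iff.1 hq'.2 with rfl | rfl <;>
            rcases Sym2.mem_iff.1 hw0 with rfl | rfl <;>
            first | rfl | (exact absurd hw0m hpm) | (exact absurd hw0m hqm)
        calc ((Un.filter (fun v => v ∈ s(a, b))).card : ℝ) * x s(a, b)
            ≤ 1 * x s(a, b) := by
              apply mul_le_mul_of_nonneg_right _ (hx0 _)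
              exact_mod_cast hc1
          _ = x s(a, b) := one_mul _
      · rw [if_neg hw]
        have : Un.filter (fun v => v ∈ s(a, b)) = ∅ := by
          push_neg at hw
          refine Finset.eq_empty_of_forall_notMem ?_
          intro p hp
          have hp' := Finset.mem_filter.1 hp
          exact (Finset.mem_filter.1 hp'.1).2 (hw p hp'.2)
        rw [this]; simp
  -- the charging claim
  have haux : ∀ u v : V, s(u, v) ∈ M → ∀ c d : V, ¬ Matched M c → ¬ Matched M d →
      s(u, c) ∈ G.edgeSet → s(v, d) ∈ G.edgeSet → c = d := by
    intro u v hm c d hc hd huc hvd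
    by_contra hcd
    obtain ⟨N, hN, hNcard⟩ := augment hM hm hcd hc hd huc hvd
    have := hmax' N hN
    omega
  set A : Sym2 V → Finset (Sym2 V) := fun m => T.filter (fun e => ∃ w, w ∈ e ∧ w ∈ m) with hA
  have claim : ∀ m ∈ M, ∑ e ∈ A m, x e ≤ 1 := by
    intro m
    induction m using Sym2.ind with
    | _ u v =>
      intro hm
      have huv : u ≠ v := fun h =>
        G.not_isDiag_of_mem_edgeSet (hM.1 _ hm) (by simp [h])
      have hMu : Matched M u := ⟨_, hm, by simp⟩
      have hMv : Matched M v := ⟨_, hm, by simp⟩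
      set P := (A s(u, v)).filter (fun e => 0 < x e) with hP
      have hPsum : ∑ e ∈ P, x e = ∑ e ∈ A s(u, v), x e := by
        refine Finset.sum_filter_of_ne ?_
        intro e _ hne
        exact lt_of_le_of_ne (hx0 e) (Ne.symm hne)
      have hPE : ∀ e ∈ P, e ∈ E := by
        intro e he
        exact Finset.mem_filter.1 (Finset.mem_filter.1 (Finset.mem_filter.1 he).1).1 |>.1
      have hstruct : ∀ e ∈ P, (∃ c, ¬ Matched M c ∧ e = s(u, c)) ∨
          (∃ c, ¬ Matched M c ∧ e = s(v, c)) := by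
        intro e
        induction e using Sym2.ind with
        | _ p q =>
          intro he
          have he1 := Finset.mem_filter.1 he
          have he2 := Finset.mem_filter.1 he1.1
          have he3 := Finset.mem_filter.1 he2.1
          obtain ⟨w0, hw0, hw0m⟩ := he3.2
          obtain ⟨w1, hw1, hw1m⟩ := he2.2
          have hw1M : Matched M w1 := by
            rcases Sym2.mem_iff.1 hw1m with h | h <;> [(rw [h]; exact hMu); (rw [h]; exact hMv)]
          have hne01 : w0 ≠ w1 := fun h => hw0m (by rw [h]; exact hw1M)
          have hepq : s(p, q) = s(w1, w0) := by
            rcases Sym2.mem_iff.1 hw0 with h0 | h0 <;> rcases Sym2.mem_iff.1 hw1 with h1 | h1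
            · exact absurd (h0.trans h1.symm) hne01
            · rw [← h0, ← h1]; exact Sym2.eq_swap
            · rw [← h0, ← h1]
            · exact absurd (h0.trans h1.symm) hne01
          rcases Sym2.mem_iff.1 hw1m with h | h
          · exact Or.inl ⟨w0, hw0m, by rw [hepq, h]⟩
          · exact Or.inr ⟨w0, hw0m, by rw [hepq, h]⟩
      have hfin : ∀ z : V, ∑ e ∈ P, x e ≤ 1 → True := fun _ _ => trivial
      have bound : ∀ z : V, P ⊆ E.filter (fun e => z ∈ e) → ∑ e ∈ A s(u, v), x e ≤ 1 := by
        intro z hsub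
        rw [← hPsum]
        exact le_trans (Finset.sum_le_sum_of_subset_of_nonneg hsub (fun e _ _ => hx0 e))
          (hxd z)
      by_cases h1 : ∃ e ∈ P, u ∈ e
      · by_cases h2 : ∃ e ∈ P, v ∈ e
        · obtain ⟨e1, he1, hu1⟩ := h1
          obtain ⟨e2, he2, hv2⟩ := h2
          have hs1 : ∃ c, ¬ Matched M c ∧ e1 = s(u, c) := by
            rcases hstruct e1 he1 with h | ⟨c, hc, rfl⟩
            · exact h
            · rcases Sym2.mem_iff.1 hu1 with h | h
              · exact absurd h huv
              · exact absurd (h ▸ hMu) hc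
          have hs2 : ∃ c, ¬ Matched M c ∧ e2 = s(v, c) := by
            rcases hstruct e2 he2 with ⟨c, hc, rfl⟩ | h
            · rcases Sym2.mem_iff.1 hv2 with h | h
              · exact absurd h.symm huv
              · exact absurd (h ▸ hMv) hc
            · exact h
          obtain ⟨a1, ha1, rfl⟩ := hs1
          obtain ⟨b1, hb1, rfl⟩ := hs2
          have hea1 : s(u, a1) ∈ G.edgeSet := hmemE _ (hPE _ he1)
          have heb1 : s(v, b1) ∈ G.edgeSet := hmemE _ (hPE _ he2)
          have hab1 : a1 = b1 := haux u v hm a1 b1 ha1 hb1 hea1 heb1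
          refine bound a1 ?_
          intro e he
          refine Finset.mem_filter.2 ⟨hPE _ he, ?_⟩
          rcases hstruct e he with ⟨c, hc, rfl⟩ | ⟨c, hc, rfl⟩
          · have : c = b1 := haux u v hm c b1 hc hb1 (hmemE _ (hPE _ he)) heb1
            rw [this, ← hab1]; simp
          · have : a1 = c := haux u v hm a1 c ha1 hc hea1 (hmemE _ (hPE _ he))
            rw [← this]; simp
        · refine bound u ?_
          intro e he
          refine Finset.mem_filter.2 ⟨hPE _ he, ?_⟩
          rcases hstruct e he with ⟨c, hc, rfl⟩ | ⟨c, hc, rfl⟩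
          · simp
          · exact absurd (⟨s(v, c), he, by simp⟩ : ∃ e ∈ P, v ∈ e) h2
      · refine bound v ?_
        intro e he
        refine Finset.mem_filter.2 ⟨hPE _ he, ?_⟩
        rcases hstruct e he with ⟨c, hc, rfl⟩ | ⟨c, hc, rfl⟩
        · exact absurd (⟨s(u, c), he, by simp⟩ : ∃ e ∈ P, u ∈ e) h1
        · simp
  have stepC2 : ∑ e ∈ T, x e ≤ (k : ℝ) := by
    have hcover : T ⊆ M.biUnion A := by
      intro e he
      have he' := Finset.mem_filter.1 he
      obtain ⟨w, hw, hwm⟩ := hmaximal _ (hmemE _ he'.1)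
      obtain ⟨m, hmM, hwm'⟩ := hwm
      exact Finset.mem_biUnion.2 ⟨m, hmM, Finset.mem_filter.2 ⟨he, ⟨w, hw, hwm'⟩⟩⟩
    calc ∑ e ∈ T, x e
        ≤ ∑ e ∈ M.biUnion A, x e :=
          Finset.sum_le_sum_of_subset_of_nonneg hcover (fun e _ _ => hx0 e)
      _ ≤ ∑ m ∈ M, ∑ e ∈ A m, x e := sum_biUnion_le' _ _ _ hx0
      _ ≤ ∑ m ∈ M, (1 : ℝ) := Finset.sum_le_sum claim
      _ = (k : ℝ) := by rw [Finset.sum_const, nsmul_eq_mul, mul_one, hk]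
  -- combine
  have hμ : (matchNum G : ℝ) = (k : ℝ) := by exact_mod_cast hcard.symm
  rw [hμ]
  have := hsplit
  nlinarith [stepA, stepB, stepC1, stepC2, hsplit]
end

section
/- Let K be a graph of maximum degree d ≥ 1/ε for some ε ∈ (0,1), and let H be its set of vertices of degree at least d(1−ε). Then K has a maximal matching that leaves at most a 2ε fraction of the vertices of H unmatched. -/
variable {V : Type*}

namespace AMM

open Finset

attribute [local instance] Classical.propDecidable

lemma matched_iff {M : Finset (Sym2 V)} {v : V} :
    Matched M v ↔ ∃ w, s(v, w) ∈ M := by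
  constructor
  · rintro ⟨e, he, hv⟩
    induction e with
    | _ x y =>
      rcases Sym2.mem_iff.mp hv with rfl | rfl
      · exact ⟨y, he⟩
      · exact ⟨x, Sym2.eq_swap ▸ he⟩
  · rintro ⟨w, hw⟩
    exact ⟨s(v, w), hw, Sym2.mem_mk_left v w⟩

lemma matched_of_mem {M : Finset (Sym2 V)} {a v : V} (h : s(a, v) ∈ M) :
    Matched M a ∧ Matched M v :=
  ⟨⟨_, h, Sym2.mem_mk_left a v⟩, ⟨_, h, Sym2.mem_mk_right a v⟩⟩

lemma matched_mono {M N : Finset (Sym2 V)} (h : M ⊆ N) {v : V} :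
    Matched M v → Matched N v := fun ⟨e, he, hv⟩ => ⟨e, h he, hv⟩

lemma ne_of_M {K : SimpleGraph V} {M : Finset (Sym2 V)} (hM : IsMatching K M)
    {a v : V} (h : s(a, v) ∈ M) : a ≠ v :=
  K.ne_of_adj ((SimpleGraph.mem_edgeSet K).mp (hM.1 _ h))

noncomputable def pr (M : Finset (Sym2 V)) (v : V) : V :=
  if h : ∃ w, s(v, w) ∈ M then h.choose else v

lemma pr_mem {M : Finset (Sym2 V)} {v : V} (h : Matched M v) : s(v, pr M v) ∈ M := by
  have h' := matched_iff.mp h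
  rw [pr, dif_pos h']
  exact h'.choose_spec

lemma pr_eq {K : SimpleGraph V} {M : Finset (Sym2 V)} (hM : IsMatching K M)
    {v w : V} (h : s(v, w) ∈ M) : pr M v = w := by
  have h1 : s(v, pr M v) ∈ M := pr_mem (matched_iff.mpr ⟨w, h⟩)
  by_contra hne
  have hne' : s(v, pr M v) ≠ s(v, w) := fun hh => hne (Sym2.congr_right.mp hh)
  exact hM.2 _ h1 _ h hne' v (Sym2.mem_mk_left _ _) (Sym2.mem_mk_left _ _)

lemma pr_matched {M : Finset (Sym2 V)} {v : V} (h : Matched M v) : Matched M (pr M v) :=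
  (matched_of_mem (pr_mem h)).2

lemma pr_invol {K : SimpleGraph V} {M : Finset (Sym2 V)} (hM : IsMatching K M)
    {v : V} (h : Matched M v) : pr M (pr M v) = v :=
  pr_eq hM (Sym2.eq_swap ▸ pr_mem h)

/-- vertices of a list of matching-pairs -/
def verts : List (V × V) → List V
  | [] => []
  | p :: c => p.1 :: p.2 :: verts c

@[simp] lemma verts_nil : verts ([] : List (V × V)) = [] := rfl
@[simp] lemma verts_cons (p : V × V) (c : List (V × V)) :
    verts (p :: c) = p.1 :: p.2 :: verts c := rfl

lemma verts_append : ∀ c1 c2 : List (V × V), verts (c1 ++ c2) = verts c1 ++ verts c2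
  | [], _ => rfl
  | p :: c1, c2 => by simp [verts_append c1 c2]

lemma mem_verts {z : V} : ∀ {c : List (V × V)}, z ∈ verts c ↔ ∃ p ∈ c, z = p.1 ∨ z = p.2
  | [] => by simp
  | p :: c => by
      simp only [verts_cons, List.mem_cons, mem_verts (c := c)]
      constructor
      · rintro (rfl | rfl | ⟨q, hq, h⟩)
        · exact ⟨p, Or.inl rfl, Or.inl rfl⟩
        · exact ⟨p, Or.inl rfl, Or.inr rfl⟩
        · exact ⟨q, Or.inr hq, h⟩
      · rintro ⟨q, (rfl | hq), h⟩
        · rcases h with rfl | rfl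
          · exact Or.inl rfl
          · exact Or.inr (Or.inl rfl)
        · exact Or.inr (Or.inr ⟨q, hq, h⟩)

/-- Alternating path structure: `AltP K M H u x c` means there is a simple alternating path
from an `M`-unmatched vertex `u ∈ H` to `x`, recorded as a list of pairs `(v, a)` where
`s(a,v) ∈ M` and successive pairs are joined by graph edges. -/
inductive AltP (K : SimpleGraph V) (M : Finset (Sym2 V)) (H : Finset V) :
    V → V → List (V × V) → Prop
  | base (u : V) (hu : u ∈ H) (hum : ¬ Matched M u) : AltP K M H u u []
  | step (u w : V) (c : List (V × V)) (a v : V) (h : AltP K M H u w c)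
      (hadj : K.Adj w a) (hMe : s(a, v) ∈ M)
      (ha : a ∉ u :: verts c) (hv : v ∉ u :: verts c) : AltP K M H u v ((v, a) :: c)

variable {K : SimpleGraph V} {M : Finset (Sym2 V)} {H : Finset V}

lemma alt_u {u x : V} {c : List (V × V)} (h : AltP K M H u x c) :
    u ∈ H ∧ ¬ Matched M u := by
  induction h with
  | base hu hum => exact ⟨hu, hum⟩
  | step w c a v h hadj hMe ha hv ih => exact ih

lemma alt_pairs {u x : V} {c : List (V × V)} (h : AltP K M H u x c) :
    ∀ p ∈ c, s(p.2, p.1) ∈ M := by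
  induction h with
  | base hu hum => simp
  | step w c a v h hadj hMe ha hv ih =>
      intro p hp
      rcases List.mem_cons.mp hp with rfl | hp'
      · simpa using hMe
      · exact ih p hp'

lemma alt_verts_matched {u x : V} {c : List (V × V)} (h : AltP K M H u x c) :
    ∀ z ∈ verts c, Matched M z := by
  intro z hz
  rcases mem_verts.mp hz with ⟨p, hp, rfl | rfl⟩
  · exact (matched_of_mem (alt_pairs h p hp)).2
  · exact (matched_of_mem (alt_pairs h p hp)).1

lemma alt_endpoint_matched_or {u x : V} {c : List (V × V)} (h : AltP K M H u x c) :
    Matched M x ∨ x = u := by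
  cases h with
  | base hu hum => exact Or.inr rfl
  | step w c a v h hadj hMe ha hv => exact Or.inl (matched_of_mem hMe).2

lemma alt_ep_mem {u x : V} {c : List (V × V)} (h : AltP K M H u x c) :
    x ∈ u :: verts c := by
  cases h with
  | base hu hum => simp
  | step w c a v h hadj hMe ha hv => simp

lemma alt_nodup (hM : IsMatching K M) {u x : V} {c : List (V × V)} (h : AltP K M H u x c) :
    (u :: verts c).Nodup := by
  induction h with
  | base hu hum => simp
  | step w c a v h hadj hMe ha hv ih =>
      have hav : a ≠ v := ne_of_M hM hMe
      simp only [List.mem_cons, not_or] at ha hv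
      simp only [verts_cons, List.nodup_cons, List.mem_cons, not_or] at ih ⊢
      exact ⟨⟨fun h => hv.1 h.symm, fun h => ha.1 h.symm, ih.1⟩, ⟨hav.symm, hv.2⟩, ha.2, ih.2⟩

lemma alt_self_base {u x : V} {c : List (V × V)} (h : AltP K M H u x c) :
    AltP K M H u u [] :=
  AltP.base u (alt_u h).1 (alt_u h).2

def ep (u : V) : List (V × V) → V
  | [] => u
  | p :: _ => p.1

lemma alt_ep {u x : V} {c : List (V × V)} (h : AltP K M H u x c) : x = ep u c := by
  cases h with
  | base hu hum => rfl
  | step w c a v h hadj hMe ha hv => rfl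

lemma alt_suffix {u : V} : ∀ {c1 c2 : List (V × V)} {x : V},
    AltP K M H u x (c1 ++ c2) → AltP K M H u (ep u c2) c2 := by
  intro c1
  induction c1 with
  | nil => intro c2 x h; exact (alt_ep h) ▸ h
  | cons p c1 ih =>
      intro c2 x h
      rw [List.cons_append] at h
      cases h with
      | step w c a v h hadj hMe ha hv => exact ih h

lemma alt_step' (hM : IsMatching K M) {u w a v : V} {c : List (V × V)}
    (h : AltP K M H u w c) (hadj : K.Adj w a) (hMe : s(a, v) ∈ M)
    (ha : a ∉ verts c) (hv : v ∉ verts c) : AltP K M H u v ((v, a) :: c) := by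
  have hu := (alt_u h).2
  have ha' : a ≠ u := fun e => hu (e ▸ (matched_of_mem hMe).1)
  have hv' : v ≠ u := fun e => hu (e ▸ (matched_of_mem hMe).2)
  exact AltP.step u w c a v h hadj hMe (by simp [ha, ha']) (by simp [hv, hv'])

lemma matched_insert {N : Finset (Sym2 V)} {e : Sym2 V} {z : V} :
    Matched (insert e N) z ↔ z ∈ e ∨ Matched N z := by
  constructor
  · rintro ⟨f, hf, hz⟩
    rcases Finset.mem_insert.mp hf with rfl | hf'
    · exact Or.inl hz
    · exact Or.inr ⟨f, hf', hz⟩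
  · rintro (hz | ⟨f, hf, hz⟩)
    · exact ⟨e, Finset.mem_insert_self e N, hz⟩
    · exact ⟨f, Finset.mem_insert_of_mem hf, hz⟩

lemma matched_erase {N : Finset (Sym2 V)} (hN : IsMatching K N)
    {e : Sym2 V} (he : e ∈ N) {z : V} :
    Matched (N.erase e) z ↔ Matched N z ∧ z ∉ e := by
  constructor
  · rintro ⟨f, hf, hz⟩
    have hf' : f ∈ N := Finset.mem_of_mem_erase hf
    exact ⟨⟨f, hf', hz⟩, hN.2 f hf' e he (Finset.ne_of_mem_erase hf) z hz⟩
  · rintro ⟨⟨f, hf, hz⟩, hze⟩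
    have : f ≠ e := fun h => hze (h ▸ hz)
    exact ⟨f, Finset.mem_erase_of_ne_of_mem this hf, hz⟩

lemma alt_swap (hM : IsMatching K M) {u x : V} {c : List (V × V)} (h : AltP K M H u x c) :
    ∃ M' : Finset (Sym2 V), IsMatching K M' ∧
      (∀ z, Matched M' z ↔ (Matched M z ∨ z = u) ∧ z ≠ x) ∧
      (∀ e ∈ M, (∀ z ∈ e, z ∉ u :: verts c) → e ∈ M') := by
  induction h with
  | base hu hum =>
      refine ⟨M, hM, fun z => ?_, fun e he _ => he⟩
      constructor
      · intro hz
        exact ⟨Or.inl hz, fun h' => hum (h' ▸ hz)⟩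
      · rintro ⟨hz | rfl, hne⟩
        · exact hz
        · exact absurd rfl hne
  | step w c a v h hadj hMe ha hv ih =>
      obtain ⟨N, hN, hNm, hNe⟩ := ih
      have hav : s(a, v) ∈ N := by
        refine hNe _ hMe ?_
        intro z hz
        rcases Sym2.mem_iff.mp hz with rfl | rfl
        · exact ha
        · exact hv
      have hwmem : w ∈ u :: verts c := alt_ep_mem h
      have hwa : w ≠ a := fun e => (e ▸ ha) hwmem
      have hwv : w ≠ v := fun e => (e ▸ hv) hwmem
      have hva : a ≠ v := ne_of_M hM hMe
      have hau : a ≠ u := by intro e; exact (e ▸ ha) (List.mem_cons_self)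
      have hvu : v ≠ u := by intro e; exact (e ▸ hv) (List.mem_cons_self)
      have hNw : ¬ Matched N w := by
        rw [hNm]; rintro ⟨_, h2⟩; exact h2 rfl
      have key_a : ∀ f ∈ N, a ∈ f → f = s(a, v) := by
        intro f hf haf
        by_contra hne
        exact hN.2 f hf _ hav hne a haf (Sym2.mem_mk_left _ _)
      have hMw : Matched M w ∨ w = u := alt_endpoint_matched_or h
      have hMa : Matched M a := (matched_of_mem hMe).1
      refine ⟨insert s(w, a) (N.erase s(a, v)), ⟨?_, ?_⟩, ?_, ?_⟩
      · -- edges in edgeSet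
        intro e he
        rcases Finset.mem_insert.mp he with rfl | he'
        · exact (SimpleGraph.mem_edgeSet K).mpr hadj
        · exact hN.1 e (Finset.mem_of_mem_erase he')
      · -- pairwise disjoint
        intro e he f hf hef z hze hzf
        rcases Finset.mem_insert.mp he with rfl | he' <;>
          rcases Finset.mem_insert.mp hf with rfl | hf'
        · exact hef rfl
        · rcases Sym2.mem_iff.mp hze with rfl | rfl
          · exact hNw ⟨f, Finset.mem_of_mem_erase hf', hzf⟩
          · exact Finset.ne_of_mem_erase hf' (key_a f (Finset.mem_of_mem_erase hf') hzf)
        · rcases Sym2.mem_iff.mp hzf with rfl | rfl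
          · exact hNw ⟨e, Finset.mem_of_mem_erase he', hze⟩
          · exact Finset.ne_of_mem_erase he' (key_a e (Finset.mem_of_mem_erase he') hze)
        · exact hN.2 e (Finset.mem_of_mem_erase he') f (Finset.mem_of_mem_erase hf') hef z hze hzf
      · -- matched formula
        intro z
        rw [matched_insert, matched_erase hN hav, hNm z, Sym2.mem_iff, Sym2.mem_iff]
        constructor
        · rintro ((rfl | rfl) | ⟨⟨h1, _⟩, h2⟩)
          · exact ⟨hMw, hwv⟩
          · exact ⟨Or.inl hMa, hva⟩
          · push_neg at h2
            exact ⟨h1, h2.2⟩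
        · rintro ⟨h1, h2⟩
          by_cases hzw : z = w
          · exact Or.inl (Or.inl hzw)
          by_cases hza : z = a
          · exact Or.inl (Or.inr hza)
          · refine Or.inr ⟨⟨h1, hzw⟩, ?_⟩
            push_neg
            exact ⟨hza, h2⟩
      · -- preservation
        intro e he hfresh
        have h1 : ∀ z ∈ e, z ∉ u :: verts c := by
          intro z hz
          have := hfresh z hz
          simp only [verts_cons, List.mem_cons, not_or] at this ⊢
          exact ⟨this.1, this.2.2.2⟩
        have h2 : e ∈ N := hNe e he h1
        have h3 : e ≠ s(a, v) := by
          rintro rfl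
          exact (hfresh a (Sym2.mem_mk_left _ _)) (by simp)
        exact Finset.mem_insert_of_mem (Finset.mem_erase_of_ne_of_mem h3 h2)

noncomputable def fH (H : Finset V) (N : Finset (Sym2 V)) : ℕ :=
  (H.filter (fun v => Matched N v)).card

lemma reach_mem_H (hM : IsMatching K M)
    (hopt : ∀ N, IsMatching K N → fH H N ≤ fH H M)
    {u x : V} {c : List (V × V)} (h : AltP K M H u x c) : x ∈ H := by
  rcases alt_endpoint_matched_or h with hx | rfl
  · by_contra hxH
    obtain ⟨M', hM', hm', -⟩ := alt_swap hM h
    have huH : u ∈ H := (alt_u h).1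
    have hum : ¬ Matched M u := (alt_u h).2
    have hux : u ≠ x := fun e => hum (e ▸ hx)
    have hsub : H.filter (fun z => Matched M' z)
        = insert u (H.filter (fun z => Matched M z)) := by
      ext z
      simp only [Finset.mem_filter, Finset.mem_insert, hm' z]
      constructor
      · rintro ⟨hzH, (hz | rfl), hne⟩
        · exact Or.inr ⟨hzH, hz⟩
        · exact Or.inl rfl
      · rintro (rfl | ⟨hzH, hz⟩)
        · exact ⟨huH, Or.inr rfl, hux⟩
        · refine ⟨hzH, Or.inl hz, ?_⟩
          rintro rfl; exact hxH hzH
    have hcard : fH H M' = fH H M + 1 := by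
      rw [fH, hsub, Finset.card_insert_of_notMem (by simp [Finset.mem_filter, hum])]
      rfl
    have := hopt M' hM'
    omega
  · exact (alt_u h).1

lemma unmatched_nbr_mem (hM : IsMatching K M)
    (hopt : ∀ N, IsMatching K N → fH H N ≤ fH H M)
    {u x y : V} {c : List (V × V)} (h : AltP K M H u x c) (hadj : K.Adj x y)
    (hyM : ¬ Matched M y) : y ∈ u :: verts c := by
  by_contra hy
  obtain ⟨M', hM', hm', -⟩ := alt_swap hM h
  have hxH : x ∈ H := reach_mem_H hM hopt h
  have huH : u ∈ H := (alt_u h).1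
  have hum : ¬ Matched M u := (alt_u h).2
  have hx' : ¬ Matched M' x := by rw [hm']; rintro ⟨-, h2⟩; exact h2 rfl
  have hy' : ¬ Matched M' y := by
    rw [hm']
    rintro ⟨hz | rfl, -⟩
    · exact hyM hz
    · exact hy (List.mem_cons_self)
  have hM'' : IsMatching K (insert s(x, y) M') := by
    constructor
    · intro e he
      rcases Finset.mem_insert.mp he with rfl | he'
      · exact (SimpleGraph.mem_edgeSet K).mpr hadj
      · exact hM'.1 e he'
    · intro e he f hf hef z hze hzf
      rcases Finset.mem_insert.mp he with rfl | he' <;>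
        rcases Finset.mem_insert.mp hf with rfl | hf'
      · exact hef rfl
      · rcases Sym2.mem_iff.mp hze with rfl | rfl
        · exact hx' ⟨f, hf', hzf⟩
        · exact hy' ⟨f, hf', hzf⟩
      · rcases Sym2.mem_iff.mp hzf with rfl | rfl
        · exact hx' ⟨e, he', hze⟩
        · exact hy' ⟨e, he', hze⟩
      · exact hM'.2 e he' f hf' hef z hze hzf
  have hsub1 : H.filter (fun z => Matched M' z)
      = (insert u (H.filter (fun z => Matched M z))).erase x := by
    ext z
    simp only [Finset.mem_filter, Finset.mem_erase, Finset.mem_insert, hm' z]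
    constructor
    · rintro ⟨hzH, (hz | rfl), hne⟩
      · exact ⟨hne, Or.inr ⟨hzH, hz⟩⟩
      · exact ⟨hne, Or.inl rfl⟩
    · rintro ⟨hne, (rfl | ⟨hzH, hz⟩)⟩
      · exact ⟨huH, Or.inr rfl, hne⟩
      · exact ⟨hzH, Or.inl hz, hne⟩
  have hxmem : x ∈ insert u (H.filter (fun z => Matched M z)) := by
    rcases alt_endpoint_matched_or h with hx | rfl
    · exact Finset.mem_insert_of_mem (Finset.mem_filter.mpr ⟨hxH, hx⟩)
    · exact Finset.mem_insert_self _ _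
  have hcard1 : (H.filter (fun z => Matched M' z)).card = fH H M := by
    rw [hsub1, Finset.card_erase_of_mem hxmem,
      Finset.card_insert_of_notMem (by simp [Finset.mem_filter, hum])]
    simp [fH]
  have hsub2 : insert x (H.filter (fun z => Matched M' z))
      ⊆ H.filter (fun z => Matched (insert s(x, y) M') z) := by
    intro z hz
    rcases Finset.mem_insert.mp hz with rfl | hz'
    · exact Finset.mem_filter.mpr ⟨hxH, matched_insert.mpr (Or.inl (Sym2.mem_mk_left _ _))⟩
    · have := Finset.mem_filter.mp hz'
      exact Finset.mem_filter.mpr ⟨this.1, matched_insert.mpr (Or.inr this.2)⟩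
  have hge : fH H M + 1 ≤ fH H (insert s(x, y) M') := by
    have h1 : (insert x (H.filter (fun z => Matched M' z))).card
        = (H.filter (fun z => Matched M' z)).card + 1 :=
      Finset.card_insert_of_notMem (by simp [Finset.mem_filter, hx'])
    have h2 := Finset.card_le_card hsub2
    rw [h1, hcard1] at h2
    exact h2
  have := hopt _ hM''
  omega

def Reach (K : SimpleGraph V) (M : Finset (Sym2 V)) (H : Finset V) (x : V) : Prop :=
  ∃ u c, AltP K M H u x c

def InA (K : SimpleGraph V) (M : Finset (Sym2 V)) (H : Finset V) (y : V) : Prop :=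
  ∃ b, (Reach K M H b ∧ Matched M b) ∧ pr M b = y

lemma nbr_split (hM : IsMatching K M)
    (hopt : ∀ N, IsMatching K N → fH H N ≤ fH H M)
    {u x y : V} {c : List (V × V)} (h : AltP K M H u x c) (hadj : K.Adj x y)
    (hyA : ¬ InA K M H y) :
    y = u ∨ ∃ c1 a c2, c = c1 ++ ((y, a) :: c2) := by
  by_cases hy : y ∈ u :: verts c
  · rcases List.mem_cons.mp hy with rfl | hy'
    · exact Or.inl rfl
    · rcases mem_verts.mp hy' with ⟨p, hp, hyp⟩
      have hpM : s(p.2, p.1) ∈ M := alt_pairs h p hp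
      obtain ⟨c1, c2, rfl⟩ := List.append_of_mem hp
      have hsuf : AltP K M H u (ep u (p :: c2)) (p :: c2) := alt_suffix h
      rcases hyp with rfl | rfl
      · exact Or.inr ⟨c1, p.2, c2, by simp⟩
      · exfalso
        apply hyA
        refine ⟨p.1, ⟨⟨u, p :: c2, hsuf⟩, (matched_of_mem hpM).2⟩, ?_⟩
        exact pr_eq hM (Sym2.eq_swap ▸ hpM)
  · by_cases hyM : Matched M y
    · exfalso
      have hprMe : s(y, pr M y) ∈ M := pr_mem hyM
      have hprm : Matched M (pr M y) := pr_matched hyM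
      have hyv : y ∉ verts c := fun hh => hy (List.mem_cons_of_mem _ hh)
      have hpru : pr M y ∉ verts c := by
        intro hmem
        rcases mem_verts.mp hmem with ⟨p, hp, h1 | h1⟩ <;>
          have hpM : s(p.2, p.1) ∈ M := alt_pairs h p hp
        · have h2 := pr_invol hM hyM
          rw [h1, pr_eq hM (Sym2.eq_swap ▸ hpM)] at h2
          exact hyv (h2 ▸ mem_verts.mpr ⟨p, hp, Or.inr rfl⟩)
        · have h2 := pr_invol hM hyM
          rw [h1, pr_eq hM hpM] at h2
          exact hyv (h2 ▸ mem_verts.mpr ⟨p, hp, Or.inl rfl⟩)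
      have hstep : AltP K M H u (pr M y) ((pr M y, y) :: c) :=
        alt_step' hM h hadj hprMe hyv hpru
      exact hyA ⟨pr M y, ⟨⟨u, _, hstep⟩, hprm⟩, pr_invol hM hyM⟩
    · exact absurd (unmatched_nbr_mem hM hopt h hadj hyM) hy

lemma casc (hM : IsMatching K M) {u : V} :
    ∀ (cup : List (V × V)) {rest : List (V × V)} {x acc_w : V} {t : List (V × V)},
    AltP K M H u x (cup ++ rest) → AltP K M H u acc_w t → K.Adj acc_w x →
    (∀ z ∈ verts cup, z ∉ u :: verts t) →
    ∀ p ∈ cup, Reach K M H p.2 := by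
  intro cup
  induction cup with
  | nil => intro rest x acc_w t h1 h2 h3 hdisj p hp; simp at hp
  | cons q cup ih =>
      intro rest x acc_w t h1 h2 h3 hdisj p hp
      obtain ⟨x0, a0⟩ := q
      rw [List.cons_append] at h1
      cases h1 with
      | step w c a v h1' hadj hMe ha hv =>
          have hx0t : x ∉ u :: verts t := hdisj x (by simp)
          have ha0t : a0 ∉ u :: verts t := hdisj a0 (by simp)
          have hstep : AltP K M H u a0 ((a0, x) :: t) :=
            AltP.step u acc_w t x a0 h2 h3 (Sym2.eq_swap ▸ hMe) hx0t ha0t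
          rcases List.mem_cons.mp hp with rfl | hp'
          · exact ⟨u, _, hstep⟩
          · refine ih h1' hstep hadj.symm ?_ p hp'
            intro z hz
            have h4 := hdisj z (by simp [hz])
            have ha0 : a0 ∉ verts cup := by
              intro hh
              exact ha (List.mem_cons_of_mem _ (by rw [verts_append]; exact List.mem_append_left _ hh))
            have hx0 : x ∉ verts cup := by
              intro hh
              exact hv (List.mem_cons_of_mem _ (by rw [verts_append]; exact List.mem_append_left _ hh))
            simp only [verts_cons, List.mem_cons, not_or] at h4 ⊢
            exact ⟨h4.1, fun e => ha0 (e ▸ hz), fun e => hx0 (e ▸ hz), h4.2⟩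

lemma casc_A (hM : IsMatching K M) {u x : V} {cup cdn : List (V × V)}
    (h : AltP K M H u x (cup ++ cdn)) (hadj : K.Adj (ep u cdn) x) :
    ∀ p ∈ cup, InA K M H p.1 := by
  have hsuf : AltP K M H u (ep u cdn) cdn := alt_suffix h
  have hnd := alt_nodup hM h
  have hdisj : ∀ z ∈ verts cup, z ∉ u :: verts cdn := by
    rw [verts_append] at hnd
    intro z hz
    rcases List.nodup_cons.mp hnd with ⟨hu, hnd'⟩
    have hdis := List.disjoint_of_nodup_append hnd'
    simp only [List.mem_cons, not_or]
    exact ⟨fun e => hu (List.mem_append_left _ (e ▸ hz)), hdis hz⟩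
  intro p hp
  have hp2 : Reach K M H p.2 := casc hM cup h hsuf hadj hdisj p hp
  have hpM : s(p.2, p.1) ∈ M := alt_pairs h p (List.mem_append_left _ hp)
  exact ⟨p.2, ⟨hp2, (matched_of_mem hpM).1⟩, pr_eq hM hpM⟩

lemma c4 (hM : IsMatching K M) (hopt : ∀ N, IsMatching K N → fH H N ≤ fH H M)
    {x y1 y2 : V} (hx : Reach K M H x) (h1 : K.Adj x y1) (h2 : K.Adj x y2)
    (hA1 : ¬ InA K M H y1) (hA2 : ¬ InA K M H y2) : y1 = y2 := by
  obtain ⟨u, c, hc⟩ := hx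
  rcases nbr_split hM hopt hc h1 hA1 with rfl | ⟨c1, a1, c2, rfl⟩
  · rcases nbr_split hM hopt hc h2 hA2 with rfl | ⟨c1', a2, c2', hsp⟩
    · rfl
    · exfalso
      have h' : AltP K M H y1 x (c ++ ([] : List (V × V))) := by simpa using hc
      exact hA2 (casc_A hM h' (by simpa [ep] using h1.symm) (y2, a2)
        (by rw [hsp]; exact List.mem_append_right _ (List.mem_cons_self)))
  · rcases nbr_split hM hopt hc h2 hA2 with rfl | ⟨c1', a2, c2', hsp⟩
    · exfalso
      have h' : AltP K M H y2 x ((c1 ++ (y1, a1) :: c2) ++ ([] : List (V × V))) := by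
        simpa using hc
      exact hA1 (casc_A hM h' (by simpa [ep] using h2.symm) (y1, a1)
        (List.mem_append_right _ (List.mem_cons_self)))
    · have hm2 : (y2, a2) ∈ c1 ++ (y1, a1) :: c2 := by
        rw [hsp]; exact List.mem_append_right _ (List.mem_cons_self)
      rcases List.mem_append.mp hm2 with hin1 | hin2
      · exact absurd (casc_A hM (cup := c1) (cdn := (y1, a1) :: c2) hc
          (by simpa [ep] using h1.symm) (y2, a2) hin1) hA2
      · rcases List.mem_cons.mp hin2 with heq | hin2'
        · simpa using (congrArg Prod.fst heq).symm
        · exfalso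
          obtain ⟨d1, d2, hd⟩ := List.append_of_mem hin2'
          have hre : c1 ++ (y1, a1) :: c2 = (c1 ++ (y1, a1) :: d1) ++ ((y2, a2) :: d2) := by
            rw [hd]; simp
          rw [hre] at hc
          exact hA1 (casc_A hM hc (by simpa [ep] using h2.symm) (y1, a1)
            (List.mem_append_right _ (List.mem_cons_self)))

lemma token_matched (hM : IsMatching K M)
    (hopt : ∀ N, IsMatching K N → fH H N ≤ fH H M)
    {x y : V} (hx : Reach K M H x) (hadj : K.Adj x y)
    (hyA : ¬ InA K M H y) : Matched M x := by
  by_contra hxm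
  obtain ⟨u, c, hc⟩ := hx
  have hxH : x ∈ H := reach_mem_H hM hopt hc
  have hbase : AltP K M H x x [] := AltP.base x hxH hxm
  rcases nbr_split hM hopt hbase hadj hyA with rfl | ⟨c1, a, c2, habs⟩
  · exact K.loopless.irrefl _ hadj
  · cases c1 <;> simp at habs

lemma main_count [Fintype V] [DecidableEq V] [DecidableRel K.Adj]
    (hM : IsMatching K M) (hopt : ∀ N, IsMatching K N → fH H N ≤ fH H M)
    (ε : ℝ) (d : ℕ) (hε0 : 0 < ε) (hε1 : ε < 1) (hd : (1:ℝ)/ε ≤ (d : ℝ))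
    (hdeg : ∀ v : V, K.degree v ≤ d)
    (hH : ∀ v : V, v ∈ H ↔ (d : ℝ) * (1 - ε) ≤ (K.degree v : ℝ)) :
    ((H.filter (fun v => ¬ Matched M v)).card : ℝ) ≤ 2 * ε * (H.card : ℝ) := by
  set Us := H.filter (fun v => ¬ Matched M v) with hUs
  set Rs := Finset.univ.filter (fun v => Reach K M H v) with hRsdef
  set Bs := Rs.filter (fun v => Matched M v) with hBsdef
  set A := Bs.image (pr M) with hAdef
  have hReachIff : ∀ v, v ∈ Rs ↔ Reach K M H v := by
    intro v; simp [hRsdef]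
  have hInAIff : ∀ y, y ∈ A ↔ InA K M H y := by
    intro y
    simp only [hAdef, Finset.mem_image, hBsdef, Finset.mem_filter]
    constructor
    · rintro ⟨b, ⟨hb1, hb2⟩, hb3⟩
      exact ⟨b, ⟨(hReachIff b).mp hb1, hb2⟩, hb3⟩
    · rintro ⟨b, ⟨hb1, hb2⟩, hb3⟩
      exact ⟨b, ⟨(hReachIff b).mpr hb1, hb2⟩, hb3⟩
  have hRsH : ∀ v ∈ Rs, v ∈ H := by
    intro v hv
    obtain ⟨u, c, hc⟩ := (hReachIff v).mp hv
    exact reach_mem_H hM hopt hc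
  have hUsRs : Us ⊆ Rs := by
    intro v hv
    rcases Finset.mem_filter.mp hv with ⟨h1, h2⟩
    exact (hReachIff v).mpr ⟨v, [], AltP.base v h1 h2⟩
  have hdisjBU : Disjoint Bs Us := by
    rw [Finset.disjoint_left]
    intro v hv hv'
    exact (Finset.mem_filter.mp hv').2 (Finset.mem_filter.mp hv).2
  have hRsUnion : Rs = Bs ∪ Us := by
    ext v
    constructor
    · intro hv
      by_cases hm : Matched M v
      · exact Finset.mem_union_left _ (Finset.mem_filter.mpr ⟨hv, hm⟩)
      · exact Finset.mem_union_right _ (Finset.mem_filter.mpr ⟨hRsH v hv, hm⟩)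
    · intro hv
      rcases Finset.mem_union.mp hv with hv | hv
      · exact (Finset.mem_filter.mp hv).1
      · exact hUsRs hv
  have hcardRs : Rs.card = Bs.card + Us.card := by
    rw [hRsUnion, Finset.card_union_of_disjoint hdisjBU]
  have hcardA : A.card = Bs.card := by
    rw [hAdef]
    apply Finset.card_image_of_injOn
    intro b1 h1 b2 h2 he
    have hm1 := (Finset.mem_filter.mp h1).2
    have hm2 := (Finset.mem_filter.mp h2).2
    have h3 := pr_invol hM hm1
    rw [he, pr_invol hM hm2] at h3
    exact h3.symm
  have hBUH : Bs.card + Us.card ≤ H.card := by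
    have hsub : Bs ∪ Us ⊆ H := by
      intro v hv
      rcases Finset.mem_union.mp hv with hv | hv
      · exact hRsH v (Finset.mem_filter.mp hv).1
      · exact (Finset.mem_filter.mp hv).1
    calc Bs.card + Us.card = (Bs ∪ Us).card := (Finset.card_union_of_disjoint hdisjBU).symm
      _ ≤ H.card := Finset.card_le_card hsub
  -- the key injection
  have hinj : (Rs.sigma (fun x => K.neighborFinset x)).card
      ≤ ((A.sigma (fun a => K.neighborFinset a)).disjSum Bs).card := by
    apply Finset.card_le_card_of_injOn
      (fun p => if p.2 ∈ A then Sum.inl ⟨p.2, p.1⟩ else Sum.inr p.1)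
    · rintro ⟨px, py⟩ hp
      rcases Finset.mem_sigma.mp hp with ⟨hp1, hp2⟩
      have hadj : K.Adj px py := (SimpleGraph.mem_neighborFinset _ _ _).mp hp2
      by_cases hPA : py ∈ A
      · simp only [if_pos hPA]
        exact Finset.inl_mem_disjSum.mpr (Finset.mem_sigma.mpr
          ⟨hPA, (SimpleGraph.mem_neighborFinset _ _ _).mpr hadj.symm⟩)
      · simp only [if_neg hPA]
        refine Finset.inr_mem_disjSum.mpr (Finset.mem_filter.mpr ⟨hp1, ?_⟩)
        exact token_matched hM hopt ((hReachIff px).mp hp1) hadj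
          (fun hI => hPA ((hInAIff py).mpr hI))
    · rintro ⟨px, py⟩ hp ⟨qx, qy⟩ hq he
      rcases Finset.mem_sigma.mp hp with ⟨hp1, hp2⟩
      rcases Finset.mem_sigma.mp hq with ⟨hq1, hq2⟩
      have hadjp : K.Adj px py := (SimpleGraph.mem_neighborFinset _ _ _).mp hp2
      have hadjq : K.Adj qx qy := (SimpleGraph.mem_neighborFinset _ _ _).mp hq2
      by_cases hpA : py ∈ A <;> by_cases hqA : qy ∈ A
      · simp only [if_pos hpA, if_pos hqA, Sum.inl.injEq, Sigma.mk.inj_iff,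
          heq_eq_eq] at he
        simp [he.1, he.2]
      · simp only [if_pos hpA, if_neg hqA] at he
        exact absurd he (by simp)
      · simp only [if_neg hpA, if_pos hqA] at he
        exact absurd he (by simp)
      · simp only [if_neg hpA, if_neg hqA, Sum.inr.injEq] at he
        subst he
        have hyy : py = qy := by
          exact c4 hM hopt ((hReachIff px).mp hp1) hadjp hadjq
            (fun hI => hpA ((hInAIff py).mpr hI))
            (fun hI => hqA ((hInAIff qy).mpr hI))
        simp [hyy]
  -- translate to degree sums
  have hnat : ∑ x ∈ Rs, K.degree x ≤ (∑ a ∈ A, K.degree a) + Bs.card := by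
    have e1 : (Rs.sigma (fun x => K.neighborFinset x)).card = ∑ x ∈ Rs, K.degree x := by
      rw [Finset.card_sigma]
      rfl
    have e2 : ((A.sigma (fun a => K.neighborFinset a)).disjSum Bs).card
        = (∑ a ∈ A, K.degree a) + Bs.card := by
      rw [Finset.card_disjSum, Finset.card_sigma]
      rfl
    rw [e1, e2] at hinj
    exact hinj
  -- real inequalities
  have hlb : (Rs.card : ℝ) * ((d : ℝ) * (1 - ε)) ≤ ∑ x ∈ Rs, (K.degree x : ℝ) := by
    have := Finset.card_nsmul_le_sum Rs (fun x => (K.degree x : ℝ)) ((d : ℝ) * (1 - ε))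
      (fun x hx => (hH x).mp (hRsH x hx))
    simpa [nsmul_eq_mul] using this
  have hub : ∑ a ∈ A, (K.degree a : ℝ) ≤ (A.card : ℝ) * (d : ℝ) := by
    have := Finset.sum_le_card_nsmul A (fun a => (K.degree a : ℝ)) (d : ℝ)
      (fun a _ => Nat.cast_le.mpr (hdeg a))
    simpa [nsmul_eq_mul] using this
  have hnatR : (∑ x ∈ Rs, (K.degree x : ℝ)) ≤ (∑ a ∈ A, (K.degree a : ℝ)) + (Bs.card : ℝ) := by
    have := hnat
    push_cast
    exact_mod_cast this
  have hmain : ((Bs.card : ℝ) + (Us.card : ℝ)) * ((d : ℝ) * (1 - ε))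
      ≤ (Bs.card : ℝ) * (d : ℝ) + (Bs.card : ℝ) := by
    have h1 : ((Rs.card : ℝ)) = (Bs.card : ℝ) + (Us.card : ℝ) := by exact_mod_cast hcardRs
    have h2 : ((A.card : ℝ)) = (Bs.card : ℝ) := by exact_mod_cast hcardA
    calc ((Bs.card : ℝ) + (Us.card : ℝ)) * ((d : ℝ) * (1 - ε))
        = (Rs.card : ℝ) * ((d : ℝ) * (1 - ε)) := by rw [h1]
      _ ≤ ∑ x ∈ Rs, (K.degree x : ℝ) := hlb
      _ ≤ (∑ a ∈ A, (K.degree a : ℝ)) + (Bs.card : ℝ) := hnatR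
      _ ≤ (A.card : ℝ) * (d : ℝ) + (Bs.card : ℝ) := by linarith [hub]
      _ = (Bs.card : ℝ) * (d : ℝ) + (Bs.card : ℝ) := by rw [h2]
  -- final arithmetic
  have hbh : (Bs.card : ℝ) + (Us.card : ℝ) ≤ (H.card : ℝ) := by exact_mod_cast hBUH
  have hεd : 1 ≤ ε * (d : ℝ) := by
    have := (div_le_iff₀ hε0).mp hd
    linarith [this]
  have hD0 : (0:ℝ) ≤ (d : ℝ) := Nat.cast_nonneg d
  have hh0 : (0:ℝ) ≤ (H.card : ℝ) := Nat.cast_nonneg _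
  set uu := (Us.card : ℝ)
  set b := (Bs.card : ℝ)
  set hh := (H.card : ℝ)
  set D := (d : ℝ)
  have h1 : uu * (D * (1 - ε)) ≤ b * (1 + D * ε) := by nlinarith [hmain]
  have hpos : (0:ℝ) ≤ 1 + D * ε := by nlinarith
  have hb' : b ≤ hh - uu := by linarith
  have h3 : uu * (D + 1) ≤ hh * (1 + D * ε) := by
    nlinarith [h1, mul_le_mul_of_nonneg_right hb' hpos]
  have h4 : 1 + D * ε ≤ 2 * ε * (D + 1) := by nlinarith [hεd, hε0.le]
  have hD1 : (0:ℝ) < D + 1 := by nlinarith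
  have h5 : uu * (D + 1) ≤ (2 * ε * hh) * (D + 1) := by nlinarith [h3, h4, hh0]
  exact (mul_le_mul_iff_of_pos_right hD1).mp h5

end AMM

theorem exists_good_maximal_matching [Fintype V] [DecidableEq V]
    (K : SimpleGraph V) [DecidableRel K.Adj]
    (ε : ℝ) (d : ℕ) (hε0 : 0 < ε) (hε1 : ε < 1)
    (hd : (1 : ℝ)/ε ≤ (d : ℝ)) (hdeg : ∀ v : V, K.degree v ≤ d)
    (H : Finset V) (hH : ∀ v : V, v ∈ H ↔ (d : ℝ) * (1 - ε) ≤ (K.degree v : ℝ)) :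
    ∃ M : Finset (Sym2 V), IsMaximalMatching K M ∧
      ∀ U : Finset V, (∀ v : V, v ∈ U ↔ v ∈ H ∧ ¬ Matched M v) →
        (U.card : ℝ) ≤ 2 * ε * (H.card : ℝ) := by
  classical
  let 𝓜 : Finset (Finset (Sym2 V)) := K.edgeFinset.powerset.filter (fun N => IsMatching K N)
  have hmem : ∀ N : Finset (Sym2 V), N ∈ 𝓜 ↔ IsMatching K N := by
    intro N
    simp only [𝓜, Finset.mem_filter, Finset.mem_powerset]
    constructor
    · exact fun h => h.2
    · intro h
      exact ⟨fun e he => SimpleGraph.mem_edgeFinset.mpr (h.1 e he), h⟩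
  have hne : 𝓜.Nonempty :=
    ⟨∅, (hmem ∅).mpr ⟨fun e he => absurd he (Finset.notMem_empty e),
      fun e he => absurd he (Finset.notMem_empty e)⟩⟩
  obtain ⟨M, hM𝓜, hMopt⟩ := Finset.exists_max_image 𝓜 (AMM.fH H) hne
  have hM : IsMatching K M := (hmem M).mp hM𝓜
  have hopt : ∀ N, IsMatching K N → AMM.fH H N ≤ AMM.fH H M :=
    fun N hN => hMopt N ((hmem N).mpr hN)
  have hne2 : (𝓜.filter (fun N => M ⊆ N)).Nonempty :=
    ⟨M, Finset.mem_filter.mpr ⟨hM𝓜, Finset.Subset.refl M⟩⟩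
  obtain ⟨Mf, hMf1, hMfopt⟩ := Finset.exists_max_image _ Finset.card hne2
  have hMfm : IsMatching K Mf := (hmem Mf).mp (Finset.mem_filter.mp hMf1).1
  have hMMf : M ⊆ Mf := (Finset.mem_filter.mp hMf1).2
  have hmax : IsMaximalMatching K Mf := by
    refine ⟨hMfm, ?_⟩
    intro e he
    induction e with
    | _ x y =>
      by_contra hno
      push_neg at hno
      have hx : ¬ Matched Mf x := hno x (Sym2.mem_mk_left x y)
      have hy : ¬ Matched Mf y := hno y (Sym2.mem_mk_right x y)
      have hadj : K.Adj x y := (SimpleGraph.mem_edgeSet K).mp he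
      have hN : IsMatching K (insert s(x, y) Mf) := by
        constructor
        · intro f hf
          rcases Finset.mem_insert.mp hf with rfl | hf'
          · exact (SimpleGraph.mem_edgeSet K).mpr hadj
          · exact hMfm.1 f hf'
        · intro f hf g hg hfg z hzf hzg
          rcases Finset.mem_insert.mp hf with rfl | hf' <;>
            rcases Finset.mem_insert.mp hg with rfl | hg'
          · exact hfg rfl
          · rcases Sym2.mem_iff.mp hzf with rfl | rfl
            · exact hx ⟨g, hg', hzg⟩
            · exact hy ⟨g, hg', hzg⟩
          · rcases Sym2.mem_iff.mp hzg with rfl | rfl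
            · exact hx ⟨f, hf', hzf⟩
            · exact hy ⟨f, hf', hzf⟩
          · exact hMfm.2 f hf' g hg' hfg z hzf hzg
      have hmemN : insert s(x, y) Mf ∈ 𝓜.filter (fun N => M ⊆ N) :=
        Finset.mem_filter.mpr ⟨(hmem _).mpr hN, hMMf.trans (Finset.subset_insert _ _)⟩
      have hcard := hMfopt _ hmemN
      have hnotin : s(x, y) ∉ Mf := fun hin => hx ⟨_, hin, Sym2.mem_mk_left x y⟩
      rw [Finset.card_insert_of_notMem hnotin] at hcard
      omega
  refine ⟨Mf, hmax, ?_⟩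
  intro U hU
  have hUsub : U ⊆ H.filter (fun v => ¬ Matched M v) := by
    intro v hv
    have h1 := (hU v).mp hv
    exact Finset.mem_filter.mpr ⟨h1.1, fun hm => h1.2 (AMM.matched_mono hMMf hm)⟩
  have hcard : (U.card : ℝ) ≤ ((H.filter (fun v => ¬ Matched M v)).card : ℝ) :=
    Nat.cast_le.mpr (Finset.card_le_card hUsub)
  have hmc := AMM.main_count hM hopt ε d hε0 hε1 hd hdeg hH
  linarith
end

section
/- Let ε ∈ (0, 1/2) and let M be an ε-approximately maximal matching in a graph G. Let G' be obtained from G by at most ε·μ(G) edge insertions and deletions, and let M' be the set of edges of M not deleted. Then M' is a 6ε-approximately maximal matching in G'. -/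
variable {V : Type*}

lemma amm_bdd [Fintype V] [DecidableEq V] (G : SimpleGraph V) :
    BddAbove {n | ∃ M : Finset (Sym2 V), IsMatching G M ∧ M.card = n} := by
  refine ⟨Fintype.card (Sym2 V), ?_⟩
  rintro n ⟨M, -, rfl⟩
  exact Finset.card_le_univ M

lemma amm_le_matchNum [Fintype V] [DecidableEq V] {G : SimpleGraph V} {M : Finset (Sym2 V)}
    (h : IsMatching G M) : M.card ≤ matchNum G :=
  le_csSup (amm_bdd G) ⟨M, h, rfl⟩

lemma amm_exists_max [Fintype V] [DecidableEq V] (G : SimpleGraph V) :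
    ∃ M : Finset (Sym2 V), IsMatching G M ∧ M.card = matchNum G := by
  have hne : {n | ∃ M : Finset (Sym2 V), IsMatching G M ∧ M.card = n}.Nonempty :=
    ⟨0, ∅, ⟨by simp, by simp⟩, rfl⟩
  exact Nat.sSup_mem hne (amm_bdd G)

theorem amm_stability [Fintype V] [DecidableEq V]
    (G G' : SimpleGraph V) [DecidableRel G.Adj] [DecidableRel G'.Adj]
    (ε : ℝ) (hε0 : 0 < ε) (hε : ε < 1/2)
    (M : Finset (Sym2 V)) (hM : IsAMM G ε M)
    (hupd : ((symmDiff G.edgeFinset G'.edgeFinset).card : ℝ) ≤ ε * matchNum G)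
    (M' : Finset (Sym2 V)) (hM' : ∀ e : Sym2 V, e ∈ M' ↔ e ∈ M ∧ e ∈ G'.edgeSet) :
    IsAMM G' (6 * ε) M' := by
  classical
  obtain ⟨hMm, D, hDcard, hmaxM⟩ := hM
  set Δ : Finset (Sym2 V) := symmDiff G.edgeFinset G'.edgeFinset with hΔ
  -- M' ⊆ M
  have hsub : M' ⊆ M := fun e he => ((hM' e).1 he).1
  -- M' is a matching of G'
  have hM'match : IsMatching G' M' := by
    constructor
    · exact fun e he => ((hM' e).1 he).2
    · exact fun e he f hf hef v hv => hMm.2 e (hsub he) f (hsub hf) hef v hv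
  -- the deleted vertex set
  set B : Finset V :=
    (Δ.biUnion (fun e => Finset.univ.filter (fun v => v ∈ e))).filter
      (fun v => ¬ Matched M' v) with hB
  set D' : Finset V := D ∪ B with hD'
  -- membership in B characterization
  have hBmem : ∀ v : V, v ∈ B ↔ (∃ e ∈ Δ, v ∈ e) ∧ ¬ Matched M' v := by
    intro v
    simp [hB, Finset.mem_filter, Finset.mem_biUnion]
  -- card of B ≤ 2 * |Δ|
  have hBcard : B.card ≤ 2 * Δ.card := by
    calc B.card ≤ (Δ.biUnion (fun e => Finset.univ.filter (fun v => v ∈ e))).card :=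
          Finset.card_filter_le _ _
    _ ≤ ∑ e ∈ Δ, (Finset.univ.filter (fun v => v ∈ e)).card := Finset.card_biUnion_le
    _ ≤ ∑ _e ∈ Δ, 2 := by
        refine Finset.sum_le_sum fun e _ => ?_
        induction e using Sym2.ind with
        | _ a b =>
          have : (Finset.univ.filter (fun v => v ∈ s(a, b))) ⊆ {a, b} := by
            intro v hv
            simp only [Finset.mem_filter, Sym2.mem_iff] at hv
            simp [hv.2]
          calc _ ≤ ({a, b} : Finset V).card := Finset.card_le_card this
          _ ≤ 2 := Finset.card_insert_le _ _ |>.trans (by simp)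
    _ = 2 * Δ.card := by rw [Finset.sum_const, smul_eq_mul, mul_comm]
  -- μ(G') ≥ μ(G) - |Δ|
  have hmu : matchNum G ≤ matchNum G' + Δ.card := by
    obtain ⟨N, hN, hNcard⟩ := amm_exists_max G
    set N' : Finset (Sym2 V) := N.filter (fun e => e ∈ G'.edgeFinset) with hN'
    have hN'match : IsMatching G' N' := by
      constructor
      · intro e he
        rw [hN', Finset.mem_filter] at he
        exact (SimpleGraph.mem_edgeFinset).1 he.2
      · intro e he f hf hef v hv
        exact hN.2 e (Finset.filter_subset _ _ he) f (Finset.filter_subset _ _ hf) hef v hv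
    have h1 : N'.card ≤ matchNum G' := amm_le_matchNum hN'match
    have h2 : N.filter (fun e => e ∉ G'.edgeFinset) ⊆ Δ := by
      intro e he
      rw [Finset.mem_filter] at he
      rw [hΔ, Finset.mem_symmDiff]
      exact Or.inl ⟨SimpleGraph.mem_edgeFinset.2 (hN.1 e he.1), he.2⟩
    have h3 : N.card = N'.card + (N.filter (fun e => e ∉ G'.edgeFinset)).card := by
      rw [hN', Finset.card_filter_add_card_filter_not]
    calc matchNum G = N.card := hNcard.symm
    _ = N'.card + (N.filter (fun e => e ∉ G'.edgeFinset)).card := h3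
    _ ≤ matchNum G' + Δ.card := add_le_add h1 (Finset.card_le_card h2)
  -- real arithmetic: μ(G) ≤ 2 μ(G')
  have hmuR : (matchNum G : ℝ) ≤ 2 * matchNum G' := by
    have h1 : (matchNum G : ℝ) ≤ matchNum G' + Δ.card := by exact_mod_cast hmu
    have hg0 : (0:ℝ) ≤ (matchNum G : ℝ) := Nat.cast_nonneg _
    have hg0' : (0:ℝ) ≤ (matchNum G' : ℝ) := Nat.cast_nonneg _
    nlinarith [hupd, hg0, hg0']
  refine ⟨hM'match, D', ?_, ?_, ?_⟩
  · -- cardinality bound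
    have : (D'.card : ℝ) ≤ (D.card : ℝ) + (B.card : ℝ) := by
      exact_mod_cast Finset.card_union_le D B
    have hB2 : (B.card : ℝ) ≤ 2 * Δ.card := by exact_mod_cast hBcard
    nlinarith [hDcard, hupd, hε0.le]
  · -- M' is a matching of the restricted graph
    constructor
    · intro e he
      have heG' : e ∈ G'.edgeSet := hM'match.1 e he
      have heM : e ∈ M := hsub he
      have heR : e ∈ (restrictVerts G ((↑D : Set V)ᶜ)).edgeSet := hmaxM.1.1 e heM
      induction e using Sym2.ind with
      | _ a b =>
        rw [SimpleGraph.mem_edgeSet] at heG' heR ⊢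
        obtain ⟨-, haD, hbD⟩ := heR
        have haB : a ∉ B := by
          rw [hBmem]; push_neg
          intro _; exact ⟨s(a, b), he, by simp⟩
        have hbB : b ∉ B := by
          rw [hBmem]; push_neg
          intro _; exact ⟨s(a, b), he, by simp⟩
        refine ⟨heG', ?_, ?_⟩ <;> simp only [Set.mem_compl_iff, Finset.coe_union,
          Set.mem_union, Finset.mem_coe, hD'] <;> push_neg
        · exact ⟨haD, haB⟩
        · exact ⟨hbD, hbB⟩
    · exact fun e he f hf hef v hv => hM'match.2 e he f hf hef v hv
  · -- maximality
    intro e he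
    induction e using Sym2.ind with
    | _ a b =>
      rw [SimpleGraph.mem_edgeSet] at he
      obtain ⟨hab, haD', hbD'⟩ := he
      simp only [Set.mem_compl_iff, Finset.coe_union, Set.mem_union, Finset.mem_coe, hD'] at haD' hbD'
      push_neg at haD' hbD'
      by_contra hcon
      push_neg at hcon
      have hna : ¬ Matched M' a := by
        intro h; exact (hcon a (by simp)) h
      have hnb : ¬ Matched M' b := by
        intro h; exact (hcon b (by simp)) h
      -- s(a,b) ∉ Δ, since otherwise a ∈ B
      have heG : s(a, b) ∈ G.edgeSet := by
        by_contra hG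
        have : s(a, b) ∈ Δ := by
          rw [hΔ, Finset.mem_symmDiff]
          exact Or.inr ⟨SimpleGraph.mem_edgeFinset.2 hab, fun h =>
            hG (SimpleGraph.mem_edgeFinset.1 h)⟩
        exact haD'.2 ((hBmem a).2 ⟨⟨s(a, b), this, by simp⟩, hna⟩)
      -- so s(a,b) is an edge of restrictVerts G Dᶜ
      have heR : s(a, b) ∈ (restrictVerts G ((↑D : Set V)ᶜ)).edgeSet := by
        rw [SimpleGraph.mem_edgeSet]
        exact ⟨heG, haD'.1, hbD'.1⟩
      obtain ⟨v, hv, f, hf, hvf⟩ := hmaxM.2 _ heR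
      have hvab : ¬ Matched M' v := by
        rw [Sym2.mem_iff] at hv
        rcases hv with rfl | rfl
        · exact hna
        · exact hnb
      -- f ∉ G' (else v matched by M'), so f ∈ Δ, so v ∈ B
      have hfG' : f ∉ G'.edgeSet := by
        intro h
        exact hvab ⟨f, (hM' f).2 ⟨hf, h⟩, hvf⟩
      have hfΔ : f ∈ Δ := by
        rw [hΔ, Finset.mem_symmDiff]
        exact Or.inl ⟨SimpleGraph.mem_edgeFinset.2 (hMm.1 f hf), fun h =>
          hfG' (SimpleGraph.mem_edgeFinset.1 h)⟩
      have hvB : v ∈ B := (hBmem v).2 ⟨⟨f, hfΔ, hvf⟩, hvab⟩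
      rw [Sym2.mem_iff] at hv
      rcases hv with rfl | rfl
      · exact haD'.2 hvB
      · exact hbD'.2 hvB
end
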